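/- arXiv:1503.06997 — 4 statements merged into one kernel-verified Lean document; each statement's English description precedes it below -/
import Mathlib

section
/- Let A ∈ ℂ^{n×n} with Ind A = k and rank A^{k+1} = rank A^k = r ≤ n. Then the matrix Q = A A^D satisfies, for all i, j ∈ {1,…,n}: q_{ij} = ( Σ_{α ∈ I_{r,n}{j}} |((A^{k+1}_{j.}(a^{(k+1)}_{i.}))_α^α| ) / ( Σ_{α ∈ I_{r,n}} |((A^{k+1}))_α^α| ), where a^{(k+1)}_{i.} denotes the i-th row of A^{k+1}. -/
open Matrix

/-- The principal minor of a square matrix `M` determined by the subset `α` of indices. -/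
noncomputable def Matrix.pminor {n : Type*} [DecidableEq n] [Fintype n]
    (M : Matrix n n ℂ) (β : Finset n) : ℂ :=
  (M.submatrix (fun i : {x // x ∈ β} => i.1) (fun i : {x // x ∈ β} => i.1)).det

noncomputable section DetRepr

namespace DetRepr

variable {R : Type*} [CommRing R] {n : ℕ}

/-- generic principal minor -/
def pm (M : Matrix (Fin n) (Fin n) R) (β : Finset (Fin n)) : R :=
  (M.submatrix (fun i : {x // x ∈ β} => i.1) (fun i : {x // x ∈ β} => i.1)).det

lemma pm_map {S : Type*} [CommRing S] (f : R →+* S) (M : Matrix (Fin n) (Fin n) R)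
    (β : Finset (Fin n)) : pm (M.map f) β = f (pm M β) := by
  unfold pm
  rw [Matrix.submatrix_map, RingHom.map_det]; rfl

/-- matrix with rows in `β` replaced by unit vectors -/
def unitRows (β : Finset (Fin n)) (M : Matrix (Fin n) (Fin n) R) : Matrix (Fin n) (Fin n) R :=
  of fun l => if l ∈ β then (Pi.single l 1 : Fin n → R) else M l

/-- matrix with rows in `s` perturbed by `t • e_l` -/
def mixRows (s : Finset (Fin n)) (t : R) (M : Matrix (Fin n) (Fin n) R) :
    Matrix (Fin n) (Fin n) R :=
  of fun l => if l ∈ s then t • (Pi.single l 1 : Fin n → R) + M l else M l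

lemma det_unitRows (β : Finset (Fin n)) (M : Matrix (Fin n) (Fin n) R) :
    (unitRows β M).det = pm M (Finset.univ \ β) := by
  classical
  let e : {x : Fin n // x ∈ β} ⊕ {x : Fin n // ¬ x ∈ β} ≃ Fin n :=
    Equiv.sumCompl (· ∈ β)
  rw [← Matrix.det_submatrix_equiv_self e (unitRows β M)]
  have hsub : (unitRows β M).submatrix e e =
      Matrix.fromBlocks 1 0
        (Matrix.of fun (l : {x : Fin n // ¬ x ∈ β}) (m : {x : Fin n // x ∈ β}) => M l.1 m.1)
        (Matrix.of fun (l m : {x : Fin n // ¬ x ∈ β}) => M l.1 m.1) := by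
    ext a b
    cases a with
    | inl a =>
      cases b with
      | inl b =>
        simp only [Matrix.submatrix_apply, Matrix.fromBlocks_apply₁₁, unitRows, of_apply]
        simp only [e, Equiv.sumCompl_apply_inl, if_pos a.2]
        simp only [a.2, ↓reduceIte]
        rw [Pi.single_apply, Matrix.one_apply]
        simp only [Subtype.ext_iff, eq_comm]
      | inr b =>
        simp only [Matrix.submatrix_apply, Matrix.fromBlocks_apply₁₂, unitRows, of_apply]
        simp only [e, Equiv.sumCompl_apply_inl, Equiv.sumCompl_apply_inr, if_pos a.2]
        simp only [a.2, ↓reduceIte]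
        rw [Pi.single_apply, if_neg]
        · rfl
        · intro h; exact b.2 (h ▸ a.2)
    | inr a =>
      cases b with
      | inl b =>
        simp [e, unitRows, a.2]
      | inr b =>
        simp [e, unitRows, a.2]
  rw [hsub, Matrix.det_fromBlocks_zero₁₂, Matrix.det_one, one_mul]
  unfold pm
  let e2 : {x : Fin n // x ∈ Finset.univ \ β} ≃ {x : Fin n // ¬ x ∈ β} :=
    Equiv.subtypeEquivRight (by intro x; simp)
  rw [← Matrix.det_submatrix_equiv_self e2.symm]
  congr 1

lemma det_mixRows (s : Finset (Fin n)) (t : R) (M : Matrix (Fin n) (Fin n) R) :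
    (mixRows s t M).det = ∑ β ∈ s.powerset, t ^ β.card * pm M (Finset.univ \ β) := by
  classical
  simp only [← det_unitRows]
  induction s using Finset.induction_on generalizing M with
  | empty =>
    simp only [Finset.powerset_empty, Finset.sum_singleton, Finset.card_empty, pow_zero, one_mul]
    congr 1
  | @insert a s ha IH =>
    have hstep : mixRows (insert a s) t M =
        (mixRows s t M).updateRow a (t • (Pi.single a 1 : Fin n → R) + M a) := by
      ext l m
      rcases eq_or_ne l a with rfl | hl
      · simp [mixRows, Matrix.updateRow_self]
      · simp only [Matrix.updateRow_ne hl, mixRows, of_apply, Finset.mem_insert]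
        rcases eq_or_ne l a with h | h
        · exact absurd h hl
        · simp [h]
    have key1 : (mixRows s t M).updateRow a (Pi.single a 1) =
        mixRows s t (M.updateRow a (Pi.single a 1)) := by
      ext l m
      rcases eq_or_ne l a with rfl | hl
      · simp [mixRows, Matrix.updateRow_self, ha]
      · simp only [Matrix.updateRow_ne hl, mixRows, of_apply]
    have key2 : (mixRows s t M).updateRow a (M a) = mixRows s t M := by
      have hrow : (mixRows s t M) a = M a := if_neg ha
      conv_lhs => rw [← hrow]
      exact Matrix.updateRow_eq_self _ _
    rw [hstep, Matrix.det_updateRow_add, Matrix.det_updateRow_smul, key2, key1,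
      IH, IH]
    have hunit : ∀ β ∈ s.powerset,
        unitRows β (M.updateRow a (Pi.single a 1)) = unitRows (insert a β) M := by
      intro β hβ
      have haβ : a ∉ β := fun h => ha (Finset.mem_powerset.mp hβ h)
      ext l m
      rcases eq_or_ne l a with rfl | hl
      · simp [unitRows, haβ, Matrix.updateRow_self]
      · simp only [unitRows, of_apply, Finset.mem_insert]
        rcases Decidable.em (l ∈ β) with h | h <;>
          simp [h, hl, Matrix.updateRow_ne hl]
    rw [Finset.powerset_insert, Finset.sum_union, Finset.sum_image]
    · rw [Finset.mul_sum, add_comm]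
      congr 1
      apply Finset.sum_congr rfl
      intro β hβ
      have haβ : a ∉ β := fun h => ha (Finset.mem_powerset.mp hβ h)
      rw [hunit β hβ, Finset.card_insert_of_notMem haβ, pow_succ]
      ring
    · intro x hx y hy hxy
      have hax : a ∉ x := fun h => ha (Finset.mem_powerset.mp hx h)
      have hay : a ∉ y := fun h => ha (Finset.mem_powerset.mp hy h)
      have := congrArg (fun z => z.erase a) hxy
      simpa [Finset.erase_insert hax, Finset.erase_insert hay] using this
    · rw [Finset.disjoint_left]
      intro β hβ hβ'
      obtain ⟨γ, hγ, rfl⟩ := Finset.mem_image.mp hβ'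
      exact ha (Finset.mem_powerset.mp hβ (Finset.mem_insert_self a γ))

lemma sum_powerset_compl (s : Finset (Fin n)) (f : Finset (Fin n) → R) :
    ∑ β ∈ s.powerset, f (Finset.univ \ β) =
      ∑ α ∈ Finset.univ.powerset.filter (fun α => Finset.univ \ s ⊆ α), f α := by
  classical
  apply Finset.sum_nbij' (i := fun β => Finset.univ \ β) (j := fun α => Finset.univ \ α)
  · intro β hβ
    rw [Finset.mem_powerset] at hβ
    rw [Finset.mem_filter, Finset.mem_powerset]
    exact ⟨Finset.sdiff_subset, Finset.sdiff_subset_sdiff (le_refl _) hβ⟩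
  · intro α hα
    rw [Finset.mem_filter, Finset.mem_powerset] at hα
    rw [Finset.mem_powerset]
    intro x hx
    rw [Finset.mem_sdiff] at hx
    by_contra hxs
    exact hx.2 (hα.2 (Finset.mem_sdiff.mpr ⟨Finset.mem_univ x, hxs⟩))
  · intro β hβ
    rw [Finset.mem_powerset] at hβ
    simp [Finset.sdiff_sdiff_self_left,
      Finset.inter_eq_right.mpr (hβ.trans (Finset.subset_univ s))]
  · intro α hα
    rw [Finset.mem_filter, Finset.mem_powerset] at hα
    simp [Finset.sdiff_sdiff_self_left, Finset.inter_eq_right.mpr hα.1]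
  · intro β hβ
    rfl

/-- coefficient extraction from the expansion, over `ℂ[X]` -/
lemma coeff_det_mixRows (r : ℕ) (hrn : r ≤ n) (s : Finset (Fin n))
    (M : Matrix (Fin n) (Fin n) ℂ) :
    ((mixRows s (Polynomial.X : Polynomial ℂ) (M.map Polynomial.C)).det).coeff (n - r) =
      ∑ α ∈ (Finset.powersetCard r Finset.univ).filter (fun α => Finset.univ \ s ⊆ α),
        pm M α := by
  classical
  rw [det_mixRows]
  have hstep : ∀ β ∈ s.powerset,
      (Polynomial.X : Polynomial ℂ) ^ β.card * pm (M.map Polynomial.C) (Finset.univ \ β)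
        = (fun α => (Polynomial.X : Polynomial ℂ) ^ (n - α.card) * Polynomial.C (pm M α))
            (Finset.univ \ β) := by
    intro β hβ
    rw [Finset.mem_powerset] at hβ
    have hcard : (Finset.univ \ β).card = n - β.card := by
      rw [Finset.card_sdiff_of_subset (Finset.subset_univ β), Finset.card_univ, Fintype.card_fin]
    have hβn : β.card ≤ n := by
      simpa [Finset.card_univ] using Finset.card_le_card (Finset.subset_univ β)
    rw [pm_map]
    dsimp only
    rw [hcard]
    congr 2
    omega
  rw [Finset.sum_congr rfl hstep,
    sum_powerset_compl s
      (fun α => (Polynomial.X : Polynomial ℂ) ^ (n - α.card) * Polynomial.C (pm M α))]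
  rw [Polynomial.finset_sum_coeff]
  have hterm : ∀ α ∈ Finset.univ.powerset.filter (fun α => Finset.univ \ s ⊆ α),
      ((Polynomial.X : Polynomial ℂ) ^ (n - α.card) * Polynomial.C (pm M α)).coeff (n - r)
        = if α.card = r then pm M α else 0 := by
    intro α hα
    rw [Finset.mem_filter, Finset.mem_powerset] at hα
    have hαn : α.card ≤ n := by
      simpa [Finset.card_univ] using Finset.card_le_card hα.1
    rw [mul_comm, Polynomial.coeff_C_mul, Polynomial.coeff_X_pow]
    by_cases h : α.card = r
    · simp [h]
    · have : ¬ (n - r = n - α.card) := by omega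
      simp [this, h]
  rw [Finset.sum_congr rfl hterm, ← Finset.sum_filter]
  congr 1
  rw [Finset.powersetCard_eq_filter, Finset.filter_comm]


/-- entrywise polynomial coefficient of a polynomial matrix -/
def mcf (m : ℕ) (P : Matrix (Fin n) (Fin n) (Polynomial ℂ)) : Matrix (Fin n) (Fin n) ℂ :=
  of fun i j => (P i j).coeff m

lemma mcf_add (m : ℕ) (P1 P2 : Matrix (Fin n) (Fin n) (Polynomial ℂ)) :
    mcf (n := n) m (P1 + P2) = mcf m P1 + mcf m P2 := by
  ext i j; simp [mcf]

lemma mcf_constMul (m : ℕ) (Z : Matrix (Fin n) (Fin n) ℂ)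
    (P : Matrix (Fin n) (Fin n) (Polynomial ℂ)) :
    mcf m (Z.map Polynomial.C * P) = Z * mcf m P := by
  ext i j
  simp [mcf, Matrix.mul_apply, Polynomial.finset_sum_coeff, Polynomial.coeff_C_mul]

lemma mcf_smul_mapC (m : ℕ) (p : Polynomial ℂ) (Z : Matrix (Fin n) (Fin n) ℂ) :
    mcf m (p • Z.map Polynomial.C) = p.coeff m • Z := by
  ext i j
  simp [mcf, Polynomial.coeff_mul_C, mul_comm]

lemma mcf_smul_one (m : ℕ) (p : Polynomial ℂ) :
    mcf (n := n) m (p • (1 : Matrix (Fin n) (Fin n) (Polynomial ℂ))) =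
      p.coeff m • (1 : Matrix (Fin n) (Fin n) ℂ) := by
  have h1 : ((1 : Matrix (Fin n) (Fin n) ℂ).map Polynomial.C) =
      (1 : Matrix (Fin n) (Fin n) (Polynomial ℂ)) :=
    Matrix.map_one _ (Polynomial.C_0) (Polynomial.C_1)
  rw [← h1, mcf_smul_mapC]

lemma mcf_Xsmul_succ (m : ℕ) (P : Matrix (Fin n) (Fin n) (Polynomial ℂ)) :
    mcf (n := n) (m + 1) ((Polynomial.X : Polynomial ℂ) • P) = mcf m P := by
  ext i j; simp [mcf, Polynomial.coeff_X_mul]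

lemma mcf_Xsmul_zero (P : Matrix (Fin n) (Fin n) (Polynomial ℂ)) :
    mcf (n := n) 0 ((Polynomial.X : Polynomial ℂ) • P) = 0 := by
  ext i j; simp [mcf, Polynomial.mul_coeff_zero]

end DetRepr

end DetRepr

open DetRepr Polynomial

set_option maxHeartbeats 2000000 in
/-- Determinantal representation of `Q = A A^D`, where `X = A^D` is the
Drazin inverse of `A ∈ ℂ^{n×n}` (characterized by `A^{k+1} X = A^k`, `XAX = X`,
`AX = XA`), `k = Ind A` and `rank A^{k+1} = rank A^k = r ≤ n`. -/
theorem mul_drazinInverse_entry_det_repr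
    (n k r : ℕ) (A : Matrix (Fin n) (Fin n) ℂ)
    (hk : IsLeast {j : ℕ | (A ^ (j + 1)).rank = (A ^ j).rank} k)
    (hr1 : (A ^ (k + 1)).rank = r) (hr2 : (A ^ k).rank = r) (hrn : r ≤ n)
    (X : Matrix (Fin n) (Fin n) ℂ)
    (h1 : A ^ (k + 1) * X = A ^ k) (h2 : X * A * X = X) (h3 : A * X = X * A)
    (i j : Fin n) :
    (A * X) i j =
      (∑ α ∈ (Finset.powersetCard r (Finset.univ : Finset (Fin n))).filter
          (fun α => j ∈ α),
        ((A ^ (k + 1)).updateRow j (fun l => (A ^ (k + 1)) i l)).pminor α) /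
      (∑ α ∈ Finset.powersetCard r (Finset.univ : Finset (Fin n)),
        (A ^ (k + 1)).pminor α) := by
  classical
  have hc : Commute A X := h3
  set B : Matrix (Fin n) (Fin n) ℂ := A ^ (k+1) with hBdef
  set Q : Matrix (Fin n) (Fin n) ℂ := A * X with hQdef
  set Y : Matrix (Fin n) (Fin n) ℂ := X ^ (k+1) with hYdef
  -- basic algebra
  have hQAk : Q * A ^ k = A ^ k := by
    calc Q * A ^ k = A * (A ^ k * X) := by
          rw [hQdef, mul_assoc, (hc.symm.pow_right k).eq]
      _ = B * X := by rw [← mul_assoc, ← pow_succ', ← hBdef]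
      _ = A ^ k := h1
  have hQB : Q * B = B := by
    calc Q * B = (Q * A ^ k) * A := by rw [hBdef, pow_succ, ← mul_assoc]
      _ = A ^ k * A := by rw [hQAk]
      _ = B := by rw [hBdef, ← pow_succ]
  have hBQ : B * Q = B := by
    calc B * Q = (B * A) * X := by rw [hQdef, ← mul_assoc]
      _ = (A * B) * X := by rw [hBdef, ← pow_succ, ← pow_succ']
      _ = A * A ^ k := by rw [mul_assoc, h1]
      _ = B := by rw [hBdef, ← pow_succ']
  have hQQ : Q * Q = Q := by
    calc Q * Q = A * (X * A * X) := by
          rw [hQdef, mul_assoc, ← mul_assoc X A X]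
      _ = Q := by rw [h2]
  have hidem : IsIdempotentElem Q := hQQ
  have hBY : B * Y = Q := by
    rw [hBdef, hYdef, ← hc.mul_pow, ← hQdef]
    exact hidem.pow_succ_eq k
  have hYB : Y * B = Q := by
    rw [hBdef, hYdef, ← hc.symm.mul_pow, ← h3]
    exact hidem.pow_succ_eq k
  have hYQ : Y * Q = Y := by
    calc Y * Q = X ^ k * (X * A * X) := by
          rw [hYdef, hQdef, pow_succ, mul_assoc, ← mul_assoc X A X]
      _ = Y := by rw [h2, ← pow_succ]
  have hQY : Q * Y = Y := by
    calc Q * Y = A * (X * X ^ (k+1)) := by rw [hQdef, hYdef, mul_assoc]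
      _ = A * (X ^ (k+1) * X) := by rw [← pow_succ', ← pow_succ]
      _ = (A * X ^ (k+1)) * X := by rw [← mul_assoc]
      _ = (X ^ (k+1) * A) * X := by rw [(hc.pow_right (k+1)).eq]
      _ = Y * Q := by rw [hYdef, hQdef, mul_assoc]
      _ = Y := hYQ
  have hE : (1 - Q + B) * (1 - Q + Y) = 1 := by
    simp only [add_mul, mul_add, sub_mul, mul_sub, one_mul, mul_one, hQQ, hQY, hBQ, hBY]
    abel
  set e : ℂ := (1 - Q + B).det with hedef
  have he1 : e * (1 - Q + Y).det = 1 := by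
    rw [hedef, ← Matrix.det_mul, hE, Matrix.det_one]
  have he0 : e ≠ 0 := left_ne_zero_of_mul_eq_one he1
  -- rank of Q
  have hq : Q.rank = r := by
    apply le_antisymm
    · rw [← hBY]
      exact (Matrix.rank_mul_le_left B Y).trans hr1.le
    · calc r = (A ^ k).rank := hr2.symm
        _ = (Q * A ^ k).rank := by rw [hQAk]
        _ ≤ Q.rank := Matrix.rank_mul_le_left Q (A ^ k)
  -- rank factorization of Q
  set W : Submodule ℂ (Fin n → ℂ) := LinearMap.range Q.mulVecLin with hWdef
  have hWr : Module.finrank ℂ W = r := hq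
  let b : Module.Basis (Fin r) ℂ W := Module.finBasisOfFinrankEq ℂ W hWr
  have hmem : ∀ v : Fin n → ℂ, Q.mulVec v ∈ W := fun v => LinearMap.mem_range.mpr ⟨v, rfl⟩
  have hfix : ∀ w : W, Q.mulVec (w : Fin n → ℂ) = (w : Fin n → ℂ) := by
    rintro ⟨wv, hwv⟩
    obtain ⟨y, rfl⟩ := hwv
    show Q.mulVec (Q.mulVecLin y) = Q.mulVecLin y
    simp only [Matrix.mulVecLin_apply, Matrix.mulVec_mulVec, hQQ]
  set U : Matrix (Fin n) (Fin r) ℂ := Matrix.of fun x m => (b m : Fin n → ℂ) x with hUdef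
  set V : Matrix (Fin r) (Fin n) ℂ :=
    Matrix.of fun m x => b.repr ⟨Q.mulVec (Pi.single x 1), hmem _⟩ m with hVdef
  have hUV : U * V = Q := by
    ext x y
    rw [Matrix.mul_apply]
    have hw := b.sum_repr ⟨Q.mulVec (Pi.single y 1), hmem _⟩
    have hw2 := congrArg (fun z : W => (z : Fin n → ℂ) x) hw
    simp only [AddSubmonoidClass.coe_finset_sum, Finset.sum_apply, SetLike.val_smul,
      Pi.smul_apply, smul_eq_mul] at hw2
    have hright : Q.mulVec (Pi.single y 1) x = Q x y := by
      rw [Matrix.mulVec_single]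
      exact mul_one _
    rw [← hright, ← hw2]
    apply Finset.sum_congr rfl
    intro m _
    rw [hUdef, hVdef]
    simp [mul_comm]
  have hVU : V * U = 1 := by
    ext m m'
    rw [Matrix.mul_apply, Matrix.one_apply]
    have hsum : (∑ x, ((b m' : Fin n → ℂ) x) •
        (⟨Q.mulVec (Pi.single x 1), hmem _⟩ : W)) = ⟨Q.mulVec (b m' : Fin n → ℂ), hmem _⟩ := by
      apply Subtype.ext
      simp only [AddSubmonoidClass.coe_finset_sum, SetLike.val_smul]
      funext t
      simp only [Finset.sum_apply, Pi.smul_apply, smul_eq_mul]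
      rw [Matrix.mulVec]
      simp only [Matrix.mulVec_single, dotProduct]
      simp [mul_one, mul_comm]
    have hcalc : (∑ x, V m x * U x m') =
        b.repr (∑ x, ((b m' : Fin n → ℂ) x) • (⟨Q.mulVec (Pi.single x 1), hmem _⟩ : W)) m := by
      rw [map_sum]
      rw [Finsupp.finset_sum_apply]
      apply Finset.sum_congr rfl
      intro x _
      rw [_root_.map_smul, Finsupp.smul_apply, smul_eq_mul, hUdef, hVdef]
      simp [mul_comm]
    rw [hcalc, hsum]
    have hbm : (⟨Q.mulVec (b m' : Fin n → ℂ), hmem _⟩ : W) = b m' :=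
      Subtype.ext (hfix (b m'))
    rw [hbm, b.repr_self, Finsupp.single_apply]
    simp [eq_comm]
  -- determinant of the projector pencil
  have hdetproj : ∀ t : ℂ, t ≠ 0 →
      (Q + t • ((1 : Matrix (Fin n) (Fin n) ℂ) - Q)).det = t ^ (n - r) := by
    intro t ht
    set c : ℂ := (1 - t) * t⁻¹ with hcdef
    have htc : t * c = 1 - t := by
      rw [hcdef]
      field_simp
    have hA : Q + t • ((1 : Matrix (Fin n) (Fin n) ℂ) - Q) =
        t • ((1 : Matrix (Fin n) (Fin n) ℂ) + c • (U * V)) := by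
      rw [hUV, smul_add, smul_smul, htc, smul_sub, sub_smul, one_smul]
      abel
    rw [hA, Matrix.det_smul, Fintype.card_fin]
    rw [show c • (U * V) = U * (c • V) from (Matrix.mul_smul U c V).symm]
    rw [Matrix.det_one_add_mul_comm, Matrix.smul_mul, hVU]
    have h11 : (1 : Matrix (Fin r) (Fin r) ℂ) + c • 1 = (1 + c) • 1 := by
      rw [add_smul, one_smul]
    rw [h11, Matrix.det_smul, Matrix.det_one, Fintype.card_fin, mul_one]
    have hc1 : 1 + c = t⁻¹ := by
      rw [hcdef]
      field_simp
      ring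
    rw [hc1, inv_pow, ← pow_sub₀ t ht hrn]
  -- the pencil polynomial
  set FM : Matrix (Fin n) (Fin n) (Polynomial ℂ) :=
    Q.map Polynomial.C + (Polynomial.X : Polynomial ℂ) • ((1 - Q).map Polynomial.C) with hFMdef
  have hF : FM.det = (Polynomial.X : Polynomial ℂ) ^ (n - r) := by
    apply Polynomial.eq_of_infinite_eval_eq
    have hsub : {t : ℂ | t ≠ 0} ⊆
        {x | Polynomial.eval x FM.det = Polynomial.eval x ((Polynomial.X : Polynomial ℂ) ^ (n - r))} := by
      intro t ht
      simp only [Set.mem_setOf_eq] at ht ⊢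
      rw [Polynomial.eval_pow, Polynomial.eval_X]
      have hmapdet : Polynomial.eval t FM.det = (FM.map (Polynomial.evalRingHom t)).det := by
        have := RingHom.map_det (Polynomial.evalRingHom t) FM
        simpa using this
      have hFMmap : FM.map (Polynomial.evalRingHom t) = Q + t • ((1 : Matrix (Fin n) (Fin n) ℂ) - Q) := by
        ext a b'
        simp [hFMdef, Matrix.map_apply, Matrix.add_apply, Matrix.smul_apply, mul_comm]
      rw [hmapdet, hFMmap, hdetproj t ht]
    apply Set.Infinite.mono hsub
    have : ({0} : Set ℂ).Finite := Set.finite_singleton 0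
    have h2' := this.infinite_compl
    convert h2' using 1
    ext; simp
  -- polynomial matrix pencil
  set BP : Matrix (Fin n) (Fin n) (Polynomial ℂ) :=
    (Polynomial.X : Polynomial ℂ) • (1 : Matrix (Fin n) (Fin n) (Polynomial ℂ))
      + B.map Polynomial.C with hBPdef
  set p : Polynomial ℂ := BP.det with hpdef
  set GM : Matrix (Fin n) (Fin n) (Polynomial ℂ) :=
    (1 - Q + B).map Polynomial.C
      + (Polynomial.X : Polynomial ℂ) • (Q.map Polynomial.C) with hGMdef
  have hq0 : (1 - Q) * B = 0 := by rw [sub_mul, one_mul, hQB, sub_self]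
  have hq1 : Q * (1 - Q + B) = B := by
    simp only [mul_add, mul_sub, mul_one, hQQ, hQB]
    abel
  have hq2 : (1 - Q) * (1 - Q + B) = 1 - Q := by
    simp only [mul_add, mul_sub, sub_mul, one_mul, mul_one, hQQ, hQB]
    abel
  have hq3 : (1 - Q) * Q = 0 := by rw [sub_mul, one_mul, hQQ, sub_self]
  have hfact : BP = FM * GM := by
    rw [hFMdef, hGMdef, hBPdef]
    simp only [Matrix.add_mul, Matrix.mul_add, Matrix.smul_mul, Matrix.mul_smul,
      smul_smul, ← Matrix.map_mul]
    rw [show Q * (1 - Q) + Q * B = B from by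
        simp only [mul_sub, mul_one, hQQ, hQB]; abel,
      show (1 - Q) * (1 - Q) + (1 - Q) * B = 1 - Q from by
        simp only [mul_sub, sub_mul, mul_one, one_mul, hQQ, hQB]; abel,
      hq3, hQQ]
    rw [Matrix.map_zero _ Polynomial.C_0, smul_zero, add_zero]
    rw [add_assoc, ← smul_add, ← Matrix.map_add, sub_add_cancel,
      Matrix.map_one _ Polynomial.C_0 Polynomial.C_1]
    · abel
    · exact fun a₁ a₂ => map_add Polynomial.C a₁ a₂
  have hpfact : p = (Polynomial.X : Polynomial ℂ) ^ (n - r) * GM.det := by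
    rw [hpdef, hfact, Matrix.det_mul, hF]
  have hG0 : GM.det.coeff 0 = e := by
    rw [Polynomial.coeff_zero_eq_eval_zero]
    have hmapdet : Polynomial.eval 0 GM.det = (GM.map (Polynomial.evalRingHom 0)).det := by
      have := RingHom.map_det (Polynomial.evalRingHom 0) GM
      simpa using this
    have hGMmap : GM.map (Polynomial.evalRingHom 0) = 1 - Q + B := by
      ext a b'
      simp [hGMdef, Matrix.map_apply, Matrix.add_apply, Matrix.smul_apply]
    rw [hmapdet, hGMmap, hedef]
  have hplow : ∀ m, m < n - r → p.coeff m = 0 := by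
    intro m hm
    rw [hpfact, mul_comm, Polynomial.coeff_mul_X_pow']
    simp [Nat.not_le.mpr hm]
  have hpe : p.coeff (n - r) = e := by
    rw [hpfact, mul_comm, Polynomial.coeff_mul_X_pow']
    simp [hG0]
  -- expansion of the pencil determinant: denominator
  have hBPmix : BP = mixRows Finset.univ (Polynomial.X : Polynomial ℂ) (B.map Polynomial.C) := by
    ext a b'
    simp only [hBPdef, mixRows, Matrix.of_apply, Finset.mem_univ, if_true, Matrix.add_apply,
      Matrix.smul_apply, Pi.add_apply, Pi.smul_apply, smul_eq_mul, Matrix.one_apply,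
      Pi.single_apply]
    by_cases hab : a = b' <;> simp [hab, eq_comm]
  have hden : p.coeff (n - r) = ∑ α ∈ Finset.powersetCard r Finset.univ, pm B α := by
    rw [hpdef, hBPmix, coeff_det_mixRows r hrn Finset.univ B, Finset.sdiff_self,
      Finset.filter_true_of_mem (fun α _ => Finset.empty_subset α)]
  have hDen : (∑ α ∈ Finset.powersetCard r Finset.univ, B.pminor α) = e := by
    rw [show (∑ α ∈ Finset.powersetCard r Finset.univ, B.pminor α)
        = ∑ α ∈ Finset.powersetCard r Finset.univ, pm B α from rfl, ← hden, hpe]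
  -- numerator polynomial
  have hNmix : BP.updateRow j (fun l => Polynomial.C (B i l))
      = mixRows (Finset.univ.erase j) (Polynomial.X : Polynomial ℂ)
          ((B.updateRow j (fun l => B i l)).map Polynomial.C) := by
    refine Matrix.ext fun a b' => ?_
    rcases eq_or_ne a j with h | haj
    · subst h
      have h1' : a ∉ Finset.univ.erase a := Finset.notMem_erase a _
      simp only [Matrix.updateRow_self, mixRows, Matrix.of_apply, if_neg h1',
        Matrix.map_apply, Matrix.updateRow_self]
    · have hmem' : a ∈ Finset.univ.erase j := Finset.mem_erase.mpr ⟨haj, Finset.mem_univ a⟩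
      simp only [Matrix.updateRow_ne haj, mixRows, Matrix.of_apply, if_pos hmem',
        hBPdef, Matrix.add_apply, Matrix.smul_apply, Pi.add_apply, Pi.smul_apply,
        smul_eq_mul, Matrix.one_apply, Pi.single_apply, Matrix.map_apply,
        Matrix.updateRow_ne haj]
      by_cases hab : a = b' <;> simp [hab, eq_comm]
  set Adj : Matrix (Fin n) (Fin n) (Polynomial ℂ) := BP.adjugate with hAdjdef
  have hNpoly : (BP.updateRow j (fun l => Polynomial.C (B i l))).det
      = ((B.map Polynomial.C) * Adj) i j := by
    calc (BP.updateRow j (fun l => Polynomial.C (B i l))).det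
        = ((BPᵀ).updateCol j (fun l => Polynomial.C (B i l))).det := by
          rw [Matrix.updateCol_transpose, Matrix.det_transpose]
      _ = Matrix.cramer BPᵀ (fun l => Polynomial.C (B i l)) j :=
          (Matrix.cramer_apply _ _ _).symm
      _ = ((BPᵀ).adjugate *ᵥ fun l => Polynomial.C (B i l)) j := by
          rw [Matrix.cramer_eq_adjugate_mulVec]
      _ = ∑ l, Adj l j * Polynomial.C (B i l) := by
          simp [Matrix.mulVec, dotProduct, ← Matrix.adjugate_transpose,
            Matrix.transpose_apply, hAdjdef]
      _ = ((B.map Polynomial.C) * Adj) i j := by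
          rw [Matrix.mul_apply]
          simp [Matrix.map_apply, mul_comm]
  -- coefficient recurrences via the adjugate
  have hmainid : ((Polynomial.X : Polynomial ℂ) • (1 : Matrix (Fin n) (Fin n) (Polynomial ℂ))
      + B.map Polynomial.C) * Adj = p • 1 := by
    rw [← hBPdef, hAdjdef, Matrix.mul_adjugate, hpdef]
  have hI2 : ∀ m : ℕ, (1 - Q) * mcf m ((Polynomial.X : Polynomial ℂ) • Adj)
      = p.coeff m • (1 - Q) := by
    have h0 : ((1 - Q).map Polynomial.C) * BP
        = (Polynomial.X : Polynomial ℂ) • ((1 - Q).map Polynomial.C) := by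
      rw [hBPdef, Matrix.mul_add, Matrix.mul_smul, mul_one, ← Matrix.map_mul, hq0,
        Matrix.map_zero _ Polynomial.C_0, add_zero]
    have h0' : (Polynomial.X : Polynomial ℂ) • (((1 - Q).map Polynomial.C) * Adj)
        = p • ((1 - Q).map Polynomial.C) := by
      calc (Polynomial.X : Polynomial ℂ) • (((1 - Q).map Polynomial.C) * Adj)
          = ((Polynomial.X : Polynomial ℂ) • ((1 - Q).map Polynomial.C)) * Adj := by
            rw [Matrix.smul_mul]
        _ = (((1 - Q).map Polynomial.C) * BP) * Adj := by rw [h0]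
        _ = ((1 - Q).map Polynomial.C) * (BP * Adj) := by rw [Matrix.mul_assoc]
        _ = ((1 - Q).map Polynomial.C) * (p • 1) := by
            rw [hAdjdef, Matrix.mul_adjugate, hpdef]
        _ = p • ((1 - Q).map Polynomial.C) := by rw [Matrix.mul_smul, mul_one]
    intro m
    have hm := congrArg (mcf m) h0'
    rwa [show (Polynomial.X : Polynomial ℂ) • (((1 - Q).map Polynomial.C) * Adj)
        = ((1 - Q).map Polynomial.C) * ((Polynomial.X : Polynomial ℂ) • Adj) from
        (Matrix.mul_smul _ _ _).symm,
      mcf_constMul, mcf_smul_mapC] at hm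
  have hI3 : ∀ m : ℕ, Y * mcf m ((Polynomial.X : Polynomial ℂ) • Adj)
      + Q * mcf (m+1) ((Polynomial.X : Polynomial ℂ) • Adj) = p.coeff m • Y := by
    have h0 : (Y.map Polynomial.C) * BP
        = (Polynomial.X : Polynomial ℂ) • (Y.map Polynomial.C) + Q.map Polynomial.C := by
      rw [hBPdef, Matrix.mul_add, Matrix.mul_smul, mul_one, ← Matrix.map_mul, hYB]
    have h0' : (Polynomial.X : Polynomial ℂ) • ((Y.map Polynomial.C) * Adj)
        + (Q.map Polynomial.C) * Adj = p • (Y.map Polynomial.C) := by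
      calc (Polynomial.X : Polynomial ℂ) • ((Y.map Polynomial.C) * Adj)
            + (Q.map Polynomial.C) * Adj
          = ((Polynomial.X : Polynomial ℂ) • (Y.map Polynomial.C) + Q.map Polynomial.C) * Adj := by
            rw [Matrix.add_mul, Matrix.smul_mul]
        _ = ((Y.map Polynomial.C) * BP) * Adj := by rw [← h0]
        _ = (Y.map Polynomial.C) * (BP * Adj) := by rw [Matrix.mul_assoc]
        _ = (Y.map Polynomial.C) * (p • 1) := by rw [hAdjdef, Matrix.mul_adjugate, hpdef]
        _ = p • (Y.map Polynomial.C) := by rw [Matrix.mul_smul, mul_one]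
    intro m
    have hm := congrArg (mcf m) h0'
    rw [mcf_add] at hm
    rw [show (Polynomial.X : Polynomial ℂ) • ((Y.map Polynomial.C) * Adj)
        = (Y.map Polynomial.C) * ((Polynomial.X : Polynomial ℂ) • Adj) from
        (Matrix.mul_smul _ _ _).symm] at hm
    rw [mcf_constMul, mcf_constMul, mcf_smul_mapC] at hm
    rwa [show mcf (n := n) m Adj = mcf (m+1) ((Polynomial.X : Polynomial ℂ) • Adj) from
      (mcf_Xsmul_succ m Adj).symm] at hm
  have hQW : ∀ m : ℕ, m ≤ n - r →
      Q * mcf m ((Polynomial.X : Polynomial ℂ) • Adj) = 0 := by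
    intro m
    induction m with
    | zero => intro _; rw [mcf_Xsmul_zero, Matrix.mul_zero]
    | succ m IH =>
      intro hm
      have hm' : m ≤ n - r := Nat.le_of_succ_le hm
      have hpm : p.coeff m = 0 := hplow m (Nat.lt_of_succ_le hm)
      have hYW : Y * mcf m ((Polynomial.X : Polynomial ℂ) • Adj) = 0 := by
        rw [← hYQ, Matrix.mul_assoc, IH hm', Matrix.mul_zero]
      have h3' := hI3 m
      rw [hYW, hpm, zero_smul, zero_add] at h3'
      exact h3'
  have hWval : mcf (n - r) ((Polynomial.X : Polynomial ℂ) • Adj) = e • (1 - Q) := by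
    have h2' := hI2 (n - r)
    rw [hpe] at h2'
    have h3' := hQW (n - r) le_rfl
    calc mcf (n - r) ((Polynomial.X : Polynomial ℂ) • Adj)
        = (1 - Q) * mcf (n - r) ((Polynomial.X : Polynomial ℂ) • Adj)
          + Q * mcf (n - r) ((Polynomial.X : Polynomial ℂ) • Adj) := by
          rw [← Matrix.add_mul, sub_add_cancel, Matrix.one_mul]
      _ = e • (1 - Q) := by rw [h2', h3', add_zero]
  have hI1 : mcf (n - r) ((Polynomial.X : Polynomial ℂ) • Adj)
      + B * mcf (n - r) Adj = e • 1 := by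
    have hm := congrArg (mcf (n - r)) hmainid
    rwa [show ((Polynomial.X : Polynomial ℂ) • (1 : Matrix (Fin n) (Fin n) (Polynomial ℂ))
          + B.map Polynomial.C) * Adj
        = (Polynomial.X : Polynomial ℂ) • Adj + (B.map Polynomial.C) * Adj from by
          rw [Matrix.add_mul, Matrix.smul_mul, Matrix.one_mul],
      mcf_add, mcf_constMul, mcf_smul_one, hpe] at hm
  have hfin : B * mcf (n - r) Adj = e • Q := by
    have hstep : B * mcf (n - r) Adj = e • 1 - e • (1 - Q) := by
      rw [← hI1, hWval]
      abel
    rw [hstep, smul_sub]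
    abel
  have hNc : (((B.map Polynomial.C) * Adj) i j).coeff (n - r) = e * Q i j := by
    have h' : mcf (n - r) ((B.map Polynomial.C) * Adj) = e • Q := by
      rw [mcf_constMul, hfin]
    have h'' := congrArg (fun M : Matrix (Fin n) (Fin n) ℂ => M i j) h'
    simpa [mcf, Matrix.smul_apply, smul_eq_mul] using h''
  have hNum : (∑ α ∈ (Finset.powersetCard r (Finset.univ : Finset (Fin n))).filter
      (fun α => j ∈ α), (B.updateRow j fun l => B i l).pminor α) = e * Q i j := by
    rw [← hNc, ← hNpoly, hNmix, coeff_det_mixRows r hrn (Finset.univ.erase j) (B.updateRow j (fun l => B i l))]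
    have hset : (Finset.univ : Finset (Fin n)) \ Finset.univ.erase j = {j} := by
      ext x
      simp [Finset.mem_erase, em]
    rw [hset]
    simp only [Finset.singleton_subset_iff]
    rfl
  rw [hNum, hDen, mul_comm, mul_div_assoc, div_self he0, mul_one]
end

section
/- Let A ∈ ℂ^{n×n} with Ind A = k and rank A^{k+1} = rank A^k = r ≤ n. Then the matrix P = A^D A satisfies, for all i, j ∈ {1,…,n}: p_{ij} = ( Σ_{β ∈ J_{r,n}{i}} |((A^{k+1}_{.i}(a^{(k+1)}_{.j}))_β^β| ) / ( Σ_{β ∈ J_{r,n}} |((A^{k+1}))_β^β| ), where a^{(k+1)}_{.j} denotes the j-th column of A^{k+1}. -/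
open Matrix

section Aux

open Finset Equiv Function Module


variable {r n : ℕ}

theorem cb_aux (V : Matrix (Fin r) (Fin n) ℂ) (U : Matrix (Fin n) (Fin r) ℂ)
    {p : Fin r → Fin n} (H : ¬Function.Injective p) :
    (∑ σ : Equiv.Perm (Fin r), ((Equiv.Perm.sign σ : ℤ) : ℂ) *
      ∏ x, V (σ x) (p x) * U (p x) x) = 0 := by
  obtain ⟨i, j, hpij, hij⟩ : ∃ i j, p i = p j ∧ i ≠ j := by
    rw [Function.Injective] at H
    push_neg at H
    exact H
  exact
    Finset.sum_involution (fun σ _ => σ * Equiv.swap i j)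
      (fun σ _ => by
        have : (∏ x, V (σ x) (p x)) = ∏ x, V ((σ * Equiv.swap i j) x) (p x) :=
          Fintype.prod_equiv (Equiv.swap i j) _ _ (by simp [Equiv.apply_swap_eq_self hpij])
        simp [this, Equiv.Perm.sign_swap hij, prod_mul_distrib])
      (fun σ _ _ => (not_congr Equiv.mul_swap_eq_iff).mpr hij) (fun _ _ => mem_univ _)
      fun σ _ => Equiv.mul_swap_involutive i j σ

theorem cb_expand (V : Matrix (Fin r) (Fin n) ℂ) (U : Matrix (Fin n) (Fin r) ℂ) :
    det (V * U) = ∑ p : Fin r → Fin n, ∑ σ : Equiv.Perm (Fin r),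
      ((Equiv.Perm.sign σ : ℤ) : ℂ) * ∏ x, V (σ x) (p x) * U (p x) x := by
  simp only [det_apply', mul_apply, prod_univ_sum, mul_sum, Fintype.piFinset_univ]
  rw [Finset.sum_comm]

theorem cb_square (M N : Matrix (Fin r) (Fin r) ℂ) :
    ∑ p ∈ (univ : Finset (Fin r → Fin r)).filter Function.Bijective,
      ∑ σ : Equiv.Perm (Fin r),
        ((Equiv.Perm.sign σ : ℤ) : ℂ) * ∏ x, M (σ x) (p x) * N (p x) x
      = det M * det N := by
  rw [← det_mul, cb_expand]
  refine Finset.sum_subset (filter_subset _ _) fun f _ hbij => cb_aux M N ?_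
  simp only [mem_filter, mem_univ, true_and] at hbij
  rw [Finite.injective_iff_bijective]
  exact hbij

theorem cauchy_binet (V : Matrix (Fin r) (Fin n) ℂ) (U : Matrix (Fin n) (Fin r) ℂ) :
    det (V * U) = ∑ β ∈ (Finset.powersetCard r (univ : Finset (Fin n))).attach,
      det (V.submatrix id (β.1.orderEmbOfFin (Finset.mem_powersetCard.mp β.2).2)) *
        det (U.submatrix (β.1.orderEmbOfFin (Finset.mem_powersetCard.mp β.2).2) id) := by
  classical
  set S := (Finset.powersetCard r (univ : Finset (Fin n))).attach with hS
  have h1 : det (V * U)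
      = ∑ p ∈ (univ : Finset (Fin r → Fin n)).filter Function.Injective,
        ∑ σ : Equiv.Perm (Fin r),
          ((Equiv.Perm.sign σ : ℤ) : ℂ) * ∏ x, V (σ x) (p x) * U (p x) x := by
    rw [cb_expand]
    refine (Finset.sum_subset (filter_subset _ _) fun f _ hinj => cb_aux V U ?_).symm
    simpa only [mem_filter, mem_univ, true_and] using hinj
  rw [h1]
  calc
    (∑ p ∈ (univ : Finset (Fin r → Fin n)).filter Function.Injective,
        ∑ σ : Equiv.Perm (Fin r),
          ((Equiv.Perm.sign σ : ℤ) : ℂ) * ∏ x, V (σ x) (p x) * U (p x) x)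
      = ∑ x ∈ S.sigma (fun _ => (univ : Finset (Fin r → Fin r)).filter Function.Bijective),
          ∑ σ : Equiv.Perm (Fin r),
            ((Equiv.Perm.sign σ : ℤ) : ℂ) *
              ∏ y, V (σ y) ((x.1.1.orderEmbOfFin (Finset.mem_powersetCard.mp x.1.2).2) (x.2 y)) *
                U ((x.1.1.orderEmbOfFin (Finset.mem_powersetCard.mp x.1.2).2) (x.2 y)) y := by
      refine (Finset.sum_bij
        (fun x _ => (x.1.1.orderEmbOfFin (Finset.mem_powersetCard.mp x.1.2).2) ∘ x.2)
        ?_ ?_ ?_ ?_).symm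
      · rintro ⟨β, p⟩ hx
        simp only [Finset.mem_sigma, mem_filter, mem_univ, true_and] at hx
        simp only [mem_filter, mem_univ, true_and]
        exact (β.1.orderEmbOfFin (Finset.mem_powersetCard.mp β.2).2).injective.comp hx.2.injective
      · rintro ⟨β₁, p₁⟩ hx₁ ⟨β₂, p₂⟩ hx₂ h
        simp only [Finset.mem_sigma, mem_filter, mem_univ, true_and] at hx₁ hx₂
        have him : ∀ (β : {x // x ∈ Finset.powersetCard r (univ : Finset (Fin n))})
            (p : Fin r → Fin r), Function.Bijective p →
            Finset.image ((β.1.orderEmbOfFin (Finset.mem_powersetCard.mp β.2).2) ∘ p) univ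
              = β.1 := by
          intro β p hp
          apply Finset.ext
          intro x
          simp only [Finset.mem_image, mem_univ, true_and, Function.comp_apply]
          constructor
          · rintro ⟨a, rfl⟩; exact Finset.orderEmbOfFin_mem _ _ _
          · intro hxβ
            have : x ∈ Set.range (β.1.orderEmbOfFin (Finset.mem_powersetCard.mp β.2).2) := by
              rw [Finset.range_orderEmbOfFin]; exact hxβ
            obtain ⟨a, ha⟩ := this
            obtain ⟨c, rfl⟩ := hp.2 a
            exact ⟨c, ha⟩
        replace h : ((β₁.1.orderEmbOfFin (Finset.mem_powersetCard.mp β₁.2).2) ∘ p₁)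
            = ((β₂.1.orderEmbOfFin (Finset.mem_powersetCard.mp β₂.2).2) ∘ p₂) := h
        have hβ : β₁ = β₂ := by
          apply Subtype.ext
          rw [← him β₁ p₁ hx₁.2, ← him β₂ p₂ hx₂.2, h]
        rcases β₁ with ⟨β₁, hβ₁⟩
        rcases β₂ with ⟨β₂, hβ₂⟩
        cases hβ
        have hp : p₁ = p₂ := by
          funext a
          exact (β₁.orderEmbOfFin (Finset.mem_powersetCard.mp hβ₁).2).injective
            (congrFun h a)
        cases hp
        rfl
      · intro q hq
        simp only [mem_filter, mem_univ, true_and] at hq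
        have hcard : (Finset.image q univ).card = r := by
          rw [Finset.card_image_of_injective _ hq, card_univ, Fintype.card_fin]
        have hmem : Finset.image q univ ∈ Finset.powersetCard r (univ : Finset (Fin n)) := by
          rw [Finset.mem_powersetCard]
          exact ⟨Finset.subset_univ _, hcard⟩
        refine ⟨⟨⟨Finset.image q univ, hmem⟩, fun a =>
          ((Finset.image q univ).orderIsoOfFin hcard).symm ⟨q a, by
            simp [Finset.mem_image]⟩⟩, ?_, ?_⟩
        · simp only [Finset.mem_sigma, mem_filter, mem_univ, true_and, S]
          refine ⟨Finset.mem_attach _ _, ?_⟩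
          rw [← Finite.injective_iff_bijective]
          intro a b hab
          have := congrArg (((Finset.image q univ).orderIsoOfFin hcard)) hab
          simp only [OrderIso.apply_symm_apply] at this
          exact hq (congrArg Subtype.val this)
        · funext a
          simp only [Function.comp_apply]
          have h2 : ((Finset.image q univ).orderEmbOfFin
              (Finset.mem_powersetCard.mp hmem).2)
              (((Finset.image q univ).orderIsoOfFin hcard).symm ⟨q a, by simp⟩)
              = ((((Finset.image q univ).orderIsoOfFin hcard)
                  (((Finset.image q univ).orderIsoOfFin hcard).symm ⟨q a, by simp⟩) : _) : Fin n) := by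
            rw [Finset.coe_orderIsoOfFin_apply]
          rw [h2, OrderIso.apply_symm_apply]
      · rintro ⟨β, p⟩ hx
        rfl
    _ = ∑ β ∈ S, ∑ p ∈ (univ : Finset (Fin r → Fin r)).filter Function.Bijective,
          ∑ σ : Equiv.Perm (Fin r),
            ((Equiv.Perm.sign σ : ℤ) : ℂ) *
              ∏ y, V (σ y) ((β.1.orderEmbOfFin (Finset.mem_powersetCard.mp β.2).2) (p y)) *
                U ((β.1.orderEmbOfFin (Finset.mem_powersetCard.mp β.2).2) (p y)) y :=
      Finset.sum_sigma _ _ _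
    _ = ∑ β ∈ S,
        det (V.submatrix id (β.1.orderEmbOfFin (Finset.mem_powersetCard.mp β.2).2)) *
          det (U.submatrix (β.1.orderEmbOfFin (Finset.mem_powersetCard.mp β.2).2) id) := by
      refine Finset.sum_congr rfl fun β _ => ?_
      rw [← cb_square (V.submatrix id (β.1.orderEmbOfFin (Finset.mem_powersetCard.mp β.2).2))
        (U.submatrix (β.1.orderEmbOfFin (Finset.mem_powersetCard.mp β.2).2) id)]
      rfl

theorem exists_rank_factorization {n r : ℕ} (Q : Matrix (Fin n) (Fin n) ℂ)
    (hQ : Q * Q = Q) (hr : Q.rank = r) :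
    ∃ (U : Matrix (Fin n) (Fin r) ℂ) (V : Matrix (Fin r) (Fin n) ℂ),
      V * U = 1 ∧ U * V = Q := by
  classical
  set L := Q.mulVecLin with hL
  have hLL : ∀ v, L (L v) = L v := by
    intro v
    have : L ∘ₗ L = L := by
      rw [hL, ← Matrix.mulVecLin_mul, hQ]
    exact congrFun (congrArg DFunLike.coe this) v
  have hfr : finrank ℂ (LinearMap.range L) = r := hr
  let b : Basis (Fin r) ℂ (LinearMap.range L) := Module.finBasisOfFinrankEq ℂ _ hfr
  have hfix : ∀ t, L ((b t : Fin n → ℂ)) = (b t : Fin n → ℂ) := by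
    intro t
    obtain ⟨z, hz⟩ := (b t).2
    rw [← hz, hLL]
  let U : Matrix (Fin n) (Fin r) ℂ := Matrix.of fun s t => (b t : Fin n → ℂ) s
  let V : Matrix (Fin r) (Fin n) ℂ :=
    Matrix.of fun t s => b.repr (L.rangeRestrict (Pi.single s 1)) t
  have hsingle : ∀ (f : Fin n → ℂ), ∑ s, f s • (Pi.single s (1:ℂ) : Fin n → ℂ) = f := by
    intro f
    funext x
    simp [Pi.single_apply, Finset.sum_apply]
  refine ⟨U, V, ?_, ?_⟩
  · ext t' t
    have hsum : ∑ s, (b t : Fin n → ℂ) s • L.rangeRestrict (Pi.single s 1)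
        = L.rangeRestrict ((b t : Fin n → ℂ)) := by
      simp_rw [← _root_.map_smul, ← map_sum]
      rw [hsingle]
    have hrr : L.rangeRestrict ((b t : Fin n → ℂ)) = b t := by
      apply Subtype.ext
      simp [hfix t]
    have : (V * U) t' t
        = b.repr (∑ s, (b t : Fin n → ℂ) s • L.rangeRestrict (Pi.single s 1)) t' := by
      simp only [map_sum, _root_.map_smul, Finsupp.coe_finset_sum,
        Finset.sum_apply, Finsupp.coe_smul, Pi.smul_apply, smul_eq_mul, Matrix.mul_apply, V, U,
        Matrix.of_apply]
      exact Finset.sum_congr rfl fun s _ => mul_comm _ _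
    rw [this, hsum, hrr, b.repr_self]
    simp [Matrix.one_apply, Finsupp.single_apply, eq_comm]
  · ext s' s
    have h1 : (U * V) s' s
        = ((∑ t, b.repr (L.rangeRestrict (Pi.single s 1)) t • (b t : Fin n → ℂ))) s' := by
      simp only [Matrix.mul_apply, Finset.sum_apply, Pi.smul_apply, smul_eq_mul, U, V,
        Matrix.of_apply]
      exact Finset.sum_congr rfl fun t _ => mul_comm _ _
    have h2 : (∑ t, b.repr (L.rangeRestrict (Pi.single s 1)) t • (b t))
        = L.rangeRestrict (Pi.single s 1) := b.sum_repr _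
    have h3 : ((∑ t, b.repr (L.rangeRestrict (Pi.single s 1)) t • (b t) :
        LinearMap.range L) : Fin n → ℂ)
        = ∑ t, b.repr (L.rangeRestrict (Pi.single s 1)) t • (b t : Fin n → ℂ) := by
      push_cast
      rfl
    rw [h1, ← h3, h2]
    have : ((L.rangeRestrict (Pi.single s 1) : LinearMap.range L) : Fin n → ℂ)
        = Q *ᵥ Pi.single s 1 := by
      simp [L]
    rw [this]
    simp [Matrix.mulVec, dotProduct, Pi.single_apply]

theorem pminor_triple {n r : ℕ} (U : Matrix (Fin n) (Fin r) ℂ) (W : Matrix (Fin r) (Fin r) ℂ)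
    (V : Matrix (Fin r) (Fin n) ℂ) (β : Finset (Fin n)) (h : β.card = r) :
    (U * W * V).pminor β =
      det (U.submatrix (β.orderEmbOfFin h) id) * det W *
        det (V.submatrix id (β.orderEmbOfFin h)) := by
  unfold Matrix.pminor
  rw [← Matrix.det_submatrix_equiv_self (β.orderIsoOfFin h).toEquiv, Matrix.submatrix_submatrix]
  have hco : ((fun i : {x // x ∈ β} => i.1) ∘ (β.orderIsoOfFin h).toEquiv)
      = β.orderEmbOfFin h := by
    funext x; rfl
  rw [hco]
  rw [Matrix.submatrix_mul (U * W) V (β.orderEmbOfFin h) id (β.orderEmbOfFin h)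
    Function.bijective_id,
    Matrix.submatrix_mul U W (β.orderEmbOfFin h) id id Function.bijective_id,
    Matrix.submatrix_id_id, det_mul, det_mul]

theorem det_update_mul {n r : ℕ} (V : Matrix (Fin r) (Fin n) ℂ) (U : Matrix (Fin n) (Fin r) ℂ)
    (hVU : V * U = 1) (i : Fin n) (c : Fin r → ℂ) :
    det ((V.updateCol i c) * U) = 1 + (∑ t, U i t * (c t - V t i)) := by
  have hfac : (V.updateCol i c) * U
      = 1 + Matrix.replicateCol (Fin 1) (fun t => c t - V t i) * Matrix.replicateRow (Fin 1) (fun t => U i t) := by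
    ext t t'
    have hsplit : ∀ s : Fin n, (V.updateCol i c) t s * U s t'
        = V t s * U s t' + (if s = i then (c t - V t i) * U i t' else 0) := by
      intro s
      by_cases hs : s = i
      · subst hs; simp [Matrix.updateCol_self]; ring
      · simp [Matrix.updateCol_ne hs, hs]
    simp only [Matrix.mul_apply, hsplit, Finset.sum_add_distrib, Finset.sum_ite_eq',
      Finset.mem_univ, if_true]
    rw [show (∑ s, V t s * U s t') = (V * U) t t' from rfl, hVU]
    simp [Matrix.mul_apply, Matrix.one_apply]
  rw [hfac]
  refine (Matrix.det_one_add_replicateCol_mul_replicateRow (ι := Fin 1) (fun t => c t - V t i) (fun t => U i t)).trans ?_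
  simp [dotProduct, mul_comm]

end Aux

/-- Determinantal representation of `P = A^D A`, where `X = A^D` is the
Drazin inverse of `A ∈ ℂ^{n×n}` (characterized by `A^{k+1} X = A^k`, `XAX = X`,
`AX = XA`), `k = Ind A` and `rank A^{k+1} = rank A^k = r ≤ n`. -/
theorem drazinInverse_mul_entry_det_repr
    (n k r : ℕ) (A : Matrix (Fin n) (Fin n) ℂ)
    (hk : IsLeast {j : ℕ | (A ^ (j + 1)).rank = (A ^ j).rank} k)
    (hr1 : (A ^ (k + 1)).rank = r) (hr2 : (A ^ k).rank = r) (hrn : r ≤ n)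
    (X : Matrix (Fin n) (Fin n) ℂ)
    (h1 : A ^ (k + 1) * X = A ^ k) (h2 : X * A * X = X) (h3 : A * X = X * A)
    (i j : Fin n) :
    (X * A) i j =
      (∑ β ∈ (Finset.powersetCard r (Finset.univ : Finset (Fin n))).filter
          (fun β => i ∈ β),
        ((A ^ (k + 1)).updateCol i (fun l => (A ^ (k + 1)) l j)).pminor β) /
      (∑ β ∈ Finset.powersetCard r (Finset.univ : Finset (Fin n)),
        (A ^ (k + 1)).pminor β) := by
  classical
  have hcomm : ∀ m : ℕ, X * A ^ m = A ^ m * X := by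
    intro m
    induction m with
    | zero => simp
    | succ m ih =>
      rw [pow_succ, ← mul_assoc, ih, mul_assoc, ← h3, ← mul_assoc]
  have hX2 : X = X ^ 2 * A := by
    calc X = X * A * X := h2.symm
    _ = X * (X * A) := by rw [mul_assoc, h3]
    _ = X ^ 2 * A := by rw [← mul_assoc, ← sq]
  have hXpow : ∀ m : ℕ, X = X ^ (m + 1) * A ^ m := by
    intro m
    induction m with
    | zero => simp
    | succ m ih =>
      calc X = X ^ (m + 1) * A ^ m := ih
      _ = X ^ m * X * A ^ m := by rw [pow_succ]
      _ = X ^ m * (X ^ 2 * A) * A ^ m := by rw [← hX2]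
      _ = (X ^ m * X ^ 2) * (A * A ^ m) := by
          rw [mul_assoc, mul_assoc, mul_assoc]
      _ = X ^ (m + 1 + 1) * A ^ (m + 1) := by
          rw [← pow_add, ← pow_succ']
  have hQM : (X * A) * A ^ (k + 1) = A ^ (k + 1) := by
    calc (X * A) * A ^ (k + 1) = X * A ^ (k + 2) := by
          rw [mul_assoc, ← pow_succ']
    _ = A ^ (k + 2) * X := hcomm _
    _ = A * (A ^ (k + 1) * X) := by rw [← mul_assoc, ← pow_succ']
    _ = A * A ^ k := by rw [h1]
    _ = A ^ (k + 1) := (pow_succ' A k).symm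
  have hMQ : A ^ (k + 1) * (X * A) = A ^ (k + 1) := by
    calc A ^ (k + 1) * (X * A) = (A ^ (k + 1) * X) * A := by rw [mul_assoc]
    _ = A ^ k * A := by rw [h1]
    _ = A ^ (k + 1) := (pow_succ A k).symm
  have hQAk : (X * A) * A ^ k = A ^ k := by
    calc (X * A) * A ^ k = X * A ^ (k + 1) := by rw [mul_assoc, ← pow_succ']
    _ = A ^ (k + 1) * X := hcomm _
    _ = A ^ k := h1
  have hQQ : (X * A) * (X * A) = X * A := by
    rw [← mul_assoc, h2]
  have hQr : (X * A).rank = r := by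
    have hle : (X * A).rank ≤ r := by
      have hXA : X * A = X ^ (k + 1) * A ^ (k + 1) := by
        conv_lhs => rw [hXpow k]
        rw [mul_assoc, ← pow_succ]
      rw [hXA, ← hr1]
      exact Matrix.rank_mul_le_right _ _
    have hge : r ≤ (X * A).rank := by
      have h := Matrix.rank_mul_le_left (X * A) (A ^ k)
      rw [hQAk, hr2] at h
      exact h
    omega
  obtain ⟨U, V, hVU, hUV⟩ := exists_rank_factorization (X * A) hQQ hQr
  set W : Matrix (Fin r) (Fin r) ℂ := V * A ^ (k + 1) * U with hWdef
  have hMfac : U * W * V = A ^ (k + 1) := by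
    have hassoc : U * (V * A ^ (k + 1) * U) * V = (U * V) * A ^ (k + 1) * (U * V) := by
      rw [← Matrix.mul_assoc U (V * A ^ (k + 1)) U, ← Matrix.mul_assoc U V (A ^ (k + 1)),
        ← Matrix.mul_assoc (U * V * A ^ (k + 1)) U V]
    rw [hWdef, hassoc, hUV, hQM, hMQ]
  have hWrank : W.rank = r := by
    have hle : W.rank ≤ r := by
      have := Matrix.rank_le_card_width W
      simpa using this
    have hge : r ≤ W.rank := by
      have ha := Matrix.rank_mul_le_right U (W * V)
      have hb := Matrix.rank_mul_le_left W V
      rw [← Matrix.mul_assoc, hMfac, hr1] at ha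
      exact le_trans ha hb
    omega
  have hWdet : W.det ≠ 0 := by
    have hsurj : Function.Surjective W.mulVec := by
      rw [← Matrix.coe_mulVecLin, ← LinearMap.range_eq_top]
      apply Submodule.eq_top_of_finrank_eq
      have : Matrix.rank W = Module.finrank ℂ (LinearMap.range W.mulVecLin) := rfl
      rw [← this, hWrank, Module.finrank_pi]
      simp
    have : IsUnit W := Matrix.mulVec_surjective_iff_isUnit.mp hsurj
    have := (Matrix.isUnit_iff_isUnit_det W).mp this
    exact this.ne_zero
  -- denominator
  have hD : (∑ β ∈ Finset.powersetCard r (Finset.univ : Finset (Fin n)),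
      (A ^ (k + 1)).pminor β) = W.det := by
    rw [← Finset.sum_attach]
    have hpt : ∀ β : {x // x ∈ Finset.powersetCard r (Finset.univ : Finset (Fin n))},
        (A ^ (k + 1)).pminor β.1
          = W.det * (det (V.submatrix id (β.1.orderEmbOfFin
              (Finset.mem_powersetCard.mp β.2).2)) *
            det (U.submatrix (β.1.orderEmbOfFin (Finset.mem_powersetCard.mp β.2).2) id)) := by
      intro β
      rw [← hMfac, pminor_triple U W V β.1 (Finset.mem_powersetCard.mp β.2).2]
      ring
    rw [Finset.sum_congr rfl fun β _ => hpt β, ← Finset.mul_sum, ← cauchy_binet, hVU,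
      det_one, mul_one]
  -- numerator
  have hNum : (∑ β ∈ (Finset.powersetCard r (Finset.univ : Finset (Fin n))).filter
      (fun β => i ∈ β),
        ((A ^ (k + 1)).updateCol i (fun l => (A ^ (k + 1)) l j)).pminor β)
      = W.det * ((X * A) i j) := by
    have hM' : (A ^ (k + 1)).updateCol i (fun l => (A ^ (k + 1)) l j)
        = U * W * (V.updateCol i (fun t => V t j)) := by
      ext s l
      by_cases hl : l = i
      · subst hl
        rw [Matrix.updateCol_self, ← hMfac]
        simp only [Matrix.mul_apply]
        exact Finset.sum_congr rfl fun t _ => by rw [Matrix.updateCol_self]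
      · rw [Matrix.updateCol_ne hl, ← hMfac]
        simp only [Matrix.mul_apply]
        refine Finset.sum_congr rfl fun t _ => ?_
        rw [Matrix.updateCol_ne hl]
    rw [Finset.sum_filter, ← Finset.sum_attach]
    have hpt : ∀ β : {x // x ∈ Finset.powersetCard r (Finset.univ : Finset (Fin n))},
        (if i ∈ β.1 then
          ((A ^ (k + 1)).updateCol i (fun l => (A ^ (k + 1)) l j)).pminor β.1 else 0)
        = W.det * (det ((V.updateCol i (fun t => V t j)).submatrix id
              (β.1.orderEmbOfFin (Finset.mem_powersetCard.mp β.2).2)) *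
            det (U.submatrix (β.1.orderEmbOfFin (Finset.mem_powersetCard.mp β.2).2) id))
          - W.det * (det ((V.updateCol i (0 : Fin r → ℂ)).submatrix id
              (β.1.orderEmbOfFin (Finset.mem_powersetCard.mp β.2).2)) *
            det (U.submatrix (β.1.orderEmbOfFin (Finset.mem_powersetCard.mp β.2).2) id)) := by
      intro β
      set oβ := β.1.orderEmbOfFin (Finset.mem_powersetCard.mp β.2).2 with hoβ
      by_cases hi : i ∈ β.1
      · rw [if_pos hi]
        have hz : det ((V.updateCol i (0 : Fin r → ℂ)).submatrix id oβ) = 0 := by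
          have : i ∈ Set.range oβ := by
            rw [hoβ, Finset.range_orderEmbOfFin]; exact hi
          obtain ⟨x₀, hx₀⟩ := this
          apply Matrix.det_eq_zero_of_column_eq_zero x₀
          intro t
          rw [Matrix.submatrix_apply, id_eq, hx₀, Matrix.updateCol_self]
          rfl
        rw [hz, zero_mul, mul_zero, sub_zero, hM',
          pminor_triple U W _ β.1 (Finset.mem_powersetCard.mp β.2).2]
        ring
      · rw [if_neg hi]
        have hsame : ∀ c : Fin r → ℂ,
            (V.updateCol i c).submatrix id oβ = V.submatrix id oβ := by
          intro c
          ext t x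
          rw [Matrix.submatrix_apply, Matrix.submatrix_apply, Matrix.updateCol_ne]
          intro hx
          exact hi (hx ▸ Finset.orderEmbOfFin_mem _ _ _)
        rw [hsame, hsame]
        ring
    rw [Finset.sum_congr rfl fun β _ => hpt β, Finset.sum_sub_distrib,
      ← Finset.mul_sum, ← Finset.mul_sum, ← cauchy_binet, ← cauchy_binet,
      det_update_mul V U hVU, det_update_mul V U hVU, ← mul_sub]
    have hQij : (X * A) i j = ∑ t, U i t * V t j := by
      rw [← hUV, Matrix.mul_apply]
    rw [hQij]
    congr 1
    simp only [Pi.zero_apply, zero_sub]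
    rw [add_sub_add_left_eq_sub, ← Finset.sum_sub_distrib]
    exact Finset.sum_congr rfl fun t _ => by ring
  rw [hNum, hD, mul_comm, mul_div_assoc, div_self hWdet, mul_one]
end

section
/- Let A ∈ ℂ^{m×n} and W ∈ ℂ^{n×m}, let k = max{Ind(AW), Ind(WA)}, and suppose rank((AW)^k) = r. Set V̄^k = (AW)^k A with columns v̄^{(k)}_{.j}, and Ū^k = A(WA)^k with rows ū^{(k)}_{i.}. Then the entries a^{d,W}_{ij} of the W-weighted Drazin inverse A_{d,W} satisfy, for all i ∈ {1,…,m} and j ∈ {1,…,n}: a^{d,W}_{ij} = ( Σ_{β ∈ J_{r,m}{i}} |((((AW)^{k+2})_{.i}(v̄^{(k)}_{.j}))_β^β| ) / ( Σ_{β ∈ J_{r,m}} |(((AW)^{k+2}))_β^β| ), and also a^{d,W}_{ij} = ( Σ_{α ∈ I_{r,n}{j}} |((((WA)^{k+2})_{j.}(ū^{(k)}_{i.}))_α^α| ) / ( Σ_{α ∈ I_{r,n}} |(((WA)^{k+2}))_α^α| ). -/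
open Matrix

variable {ι : Type*} [DecidableEq ι] [Fintype ι] {R : Type*} [CommRing R]

/-- general-ring principal minor -/
noncomputable def mino (M : Matrix ι ι R) (β : Finset ι) : R :=
  (M.submatrix (fun i : {x // x ∈ β} => i.1) (fun i : {x // x ∈ β} => i.1)).det

lemma det_piecewise_single (M : Matrix ι ι R) (β : Finset ι) :
    (Matrix.of (β.piecewise (fun i => M i) (fun i => Pi.single i (1:R)))).det = mino M β := by
  classical
  let e : {x // x ∈ β} ⊕ {x // x ∉ β} ≃ ι := Equiv.sumCompl (· ∈ β)
  rw [← Matrix.det_submatrix_equiv_self e]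
  have : (Matrix.of (β.piecewise (fun i => M i) (fun i => Pi.single i (1:R)))).submatrix e e
      = Matrix.fromBlocks
          (M.submatrix (fun i : {x // x ∈ β} => i.1) (fun i : {x // x ∈ β} => i.1))
          (M.submatrix (fun i : {x // x ∈ β} => i.1) (fun i : {x // x ∉ β} => i.1))
          0 1 := by
    ext i j
    rcases i with i | i <;> rcases j with j | j <;>
      simp only [Matrix.submatrix_apply, Matrix.fromBlocks_apply₁₁, Matrix.fromBlocks_apply₁₂,
        Matrix.fromBlocks_apply₂₁, Matrix.fromBlocks_apply₂₂, Matrix.of_apply,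
        show ∀ x : {x // x ∈ β}, e (Sum.inl x) = x.1 from fun _ => rfl,
        show ∀ x : {x // x ∉ β}, e (Sum.inr x) = x.1 from fun _ => rfl]
    · rw [Finset.piecewise_eq_of_mem _ _ _ i.2]
    · rw [Finset.piecewise_eq_of_mem _ _ _ i.2]
    · rw [Finset.piecewise_eq_of_notMem _ _ _ i.2, Matrix.zero_apply, Pi.single_apply]
      refine if_neg (fun h => i.2 ?_)
      rw [← h]; exact j.2
    · rw [Finset.piecewise_eq_of_notMem _ _ _ i.2, Pi.single_apply, Matrix.one_apply]
      by_cases h : i = j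
      · simp [h]
      · rw [if_neg (fun hh => h (Subtype.ext hh.symm)), if_neg h]
  rw [this, Matrix.det_fromBlocks_zero₂₁]
  simp [mino]

lemma det_add_smul_indicator (M : Matrix ι ι R) (t : R) (T : Finset ι) :
    (M + t • Matrix.diagonal (fun l => if l ∈ T then (1:R) else 0)).det
      = ∑ β ∈ Finset.univ.powerset.filter (fun β : Finset ι => ∀ l, l ∉ T → l ∈ β),
          t ^ (Fintype.card ι - β.card) * mino M β := by
  classical
  set b : ι → ι → R := fun i => if i ∈ T then t • (Pi.single i (1:R) : ι → R) else (0 : ι → R)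
    with hb
  set a : ι → ι → R := fun i => M i with ha
  have hM : (M + t • Matrix.diagonal (fun l => if l ∈ T then (1:R) else 0)) = Matrix.of (a + b) := by
    ext l c
    simp only [Matrix.add_apply, Matrix.smul_apply, Matrix.diagonal_apply, Matrix.of_apply,
      Pi.add_apply, hb, ha, apply_ite (fun f : ι → R => f c), Pi.zero_apply, Pi.smul_apply,
      Pi.single_apply, smul_eq_mul]
    by_cases h : l ∈ T <;> by_cases h2 : l = c <;> simp [h, h2, eq_comm]
  rw [hM]
  have key : (Matrix.of (a + b)).det = ∑ s : Finset ι, Matrix.detRowAlternating (s.piecewise a b) :=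
    (Matrix.detRowAlternating (R := R) (n := ι)).toMultilinearMap.map_add_univ a b
  rw [key, Finset.sum_filter, Finset.powerset_univ]
  refine Finset.sum_congr rfl (fun s _ => ?_)
  by_cases hs : ∀ l, l ∉ T → l ∈ s
  · rw [if_pos hs]
    set u : ι → ι → R := s.piecewise (fun i => M i) (fun i => (Pi.single i (1:R) : ι → R))
      with hu
    have hrow : s.piecewise a b = fun i => (if i ∈ s then (1:R) else t) • u i := by
      funext i
      by_cases h : i ∈ s
      · rw [Finset.piecewise_eq_of_mem _ _ _ h, if_pos h, hu,
          Finset.piecewise_eq_of_mem _ _ _ h, one_smul]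
      · have hiT : i ∈ T := by by_contra hc; exact h (hs i hc)
        rw [Finset.piecewise_eq_of_notMem _ _ _ h, if_neg h, hu,
          Finset.piecewise_eq_of_notMem _ _ _ h, hb]
        simp only [if_pos hiT]
    rw [hrow]
    have hsmul : Matrix.detRowAlternating (fun i => (if i ∈ s then (1:R) else t) • u i)
        = (∏ i, if i ∈ s then (1:R) else t) • Matrix.detRowAlternating u :=
      (Matrix.detRowAlternating (R := R) (n := ι)).toMultilinearMap.map_smul_univ
        (fun i => if i ∈ s then (1:R) else t) u
    rw [hsmul]
    have hprod : (∏ i, if i ∈ s then (1:R) else t) = t ^ (Fintype.card ι - s.card) := by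
      rw [← Finset.prod_filter_mul_prod_filter_not Finset.univ (· ∈ s)]
      rw [Finset.prod_congr rfl (fun i hi => if_pos (Finset.mem_filter.mp hi).2),
        Finset.prod_congr rfl (fun i hi => if_neg (Finset.mem_filter.mp hi).2)]
      rw [Finset.prod_const_one, one_mul, Finset.prod_const]
      congr 1
      rw [← Finset.card_compl s]
      congr 1
      ext x
      simp [Finset.mem_compl]
    have hdet : Matrix.detRowAlternating u = mino M s := det_piecewise_single M s
    rw [hprod, hdet, smul_eq_mul]
  · rw [if_neg hs]
    push_neg at hs
    obtain ⟨l, hlT, hls⟩ := hs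
    have hz : ∀ c, (Matrix.of (s.piecewise a b)) l c = 0 := by
      intro c
      rw [Matrix.of_apply, Finset.piecewise_eq_of_notMem _ _ _ hls, hb]
      simp only [if_neg hlT]
      rfl
    exact Matrix.det_eq_zero_of_row_eq_zero l hz

lemma det_add_smul_one (M : Matrix ι ι R) (t : R) :
    (M + t • 1).det
      = ∑ β ∈ Finset.univ.powerset, t ^ (Fintype.card ι - β.card) * mino M β := by
  classical
  have h1 : (Matrix.diagonal (fun l => if l ∈ (Finset.univ : Finset ι) then (1:R) else 0))
      = (1 : Matrix ι ι R) := by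
    ext l d
    by_cases h : l = d <;> simp [Matrix.diagonal_apply, Matrix.one_apply, h]
  have := det_add_smul_indicator M t (Finset.univ : Finset ι)
  rw [h1] at this
  rw [this]
  refine (Finset.sum_congr ?_ (fun _ _ => rfl))
  rw [Finset.filter_true_of_mem]
  intro β _ l hl
  exact absurd (Finset.mem_univ l) hl

lemma det_updateCol_add_smul_one (M : Matrix ι ι R) (t : R) (i : ι) (c : ι → R) :
    ((M + t • 1).updateCol i c).det
      = ∑ β ∈ Finset.univ.powerset.filter (fun β : Finset ι => i ∈ β),
          t ^ (Fintype.card ι - β.card) * mino (M.updateCol i c) β := by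
  classical
  have hmat : (M + t • 1).updateCol i c
      = M.updateCol i c
        + t • Matrix.diagonal (fun l => if l ∈ Finset.univ.erase i then (1:R) else 0) := by
    ext l d
    by_cases h : d = i
    · subst h
      rw [Matrix.updateCol_self, Matrix.add_apply, Matrix.updateCol_self,
        Matrix.smul_apply, Matrix.diagonal_apply]
      by_cases h2 : l = d
      · subst h2; simp [Finset.mem_erase]
      · simp [h2]
    · rw [Matrix.updateCol_ne h, Matrix.add_apply, Matrix.add_apply,
        Matrix.updateCol_ne h, Matrix.smul_apply, Matrix.smul_apply,
        Matrix.one_apply, Matrix.diagonal_apply]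
      by_cases h2 : l = d
      · subst h2
        simp [Finset.mem_erase, h, Ne.symm h]
      · simp [h2]
  rw [hmat, det_add_smul_indicator]
  refine Finset.sum_congr ?_ (fun _ _ => rfl)
  apply Finset.filter_congr
  intro β _
  constructor
  · intro h
    refine h i ?_
    simp [Finset.mem_erase]
  · intro hi l hl
    simp only [Finset.mem_erase, Finset.mem_univ, and_true, not_not] at hl
    exact hl ▸ hi

lemma mino_map {S : Type*} [CommRing S] (f : R →+* S) (M : Matrix ι ι R) (β : Finset ι) :
    mino (M.map f) β = f (mino M β) := by
  unfold mino
  rw [Matrix.submatrix_map, ← RingHom.mapMatrix_apply, ← RingHom.map_det]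

lemma mino_smul (c : R) (M : Matrix ι ι R) (β : Finset ι) :
    mino (c • M) β = c ^ β.card * mino M β := by
  unfold mino
  have : (c • M).submatrix (fun i : {x // x ∈ β} => i.1) (fun i : {x // x ∈ β} => i.1)
      = c • (M.submatrix (fun i : {x // x ∈ β} => i.1) (fun i : {x // x ∈ β} => i.1)) := rfl
  rw [this, Matrix.det_smul, Fintype.card_coe]

lemma mino_eq_zero_of_rank_lt {K : Type*} [Field K] (M : Matrix ι ι K) (β : Finset ι)
    (h : M.rank < β.card) : mino M β = 0 := by
  by_contra hne
  have hunit : IsUnit (M.submatrix (fun i : {x // x ∈ β} => i.1)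
      (fun i : {x // x ∈ β} => i.1)) := by
    rw [Matrix.isUnit_iff_isUnit_det]
    exact isUnit_iff_ne_zero.mpr hne
  have hcard := Matrix.rank_of_isUnit _ hunit
  rw [Fintype.card_coe] at hcard
  -- submatrix = E₁ * M * E₂
  set E₁ : Matrix {x // x ∈ β} ι K := Matrix.of (fun x k => if k = x.1 then (1:K) else 0) with hE₁
  set E₂ : Matrix ι {x // x ∈ β} K := Matrix.of (fun k x => if k = x.1 then (1:K) else 0) with hE₂
  have hfac : M.submatrix (fun i : {x // x ∈ β} => i.1) (fun i : {x // x ∈ β} => i.1)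
      = E₁ * (M * E₂) := by
    ext x y
    rw [Matrix.mul_apply]
    rw [Finset.sum_eq_single x.1]
    · rw [hE₁, Matrix.of_apply, if_pos rfl, one_mul, Matrix.mul_apply,
        Finset.sum_eq_single y.1]
      · rw [hE₂, Matrix.of_apply, if_pos rfl, mul_one, Matrix.submatrix_apply]
      · intro l _ hne2
        rw [hE₂, Matrix.of_apply, if_neg hne2, mul_zero]
      · intro habs; exact absurd (Finset.mem_univ _) habs
    · intro l _ hne2
      rw [hE₁, Matrix.of_apply, if_neg hne2, zero_mul]
    · intro habs; exact absurd (Finset.mem_univ _) habs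
  have hle : (M.submatrix (fun i : {x // x ∈ β} => i.1) (fun i : {x // x ∈ β} => i.1)).rank
      ≤ M.rank := by
    rw [hfac]
    exact le_trans (Matrix.rank_mul_le_right E₁ (M * E₂)) (Matrix.rank_mul_le_left M E₂)
  rw [hcard] at hle
  omega

lemma comp_C_mul_X_coeff (f : Polynomial ℂ) (s : ℂ) (u : ℕ) :
    (f.comp (Polynomial.C s * Polynomial.X)).coeff u = s ^ u * f.coeff u := by
  induction f using Polynomial.induction_on' with
  | add p q hp hq => simp [Polynomial.add_comp, hp, hq, mul_add]
  | monomial n a =>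
    rw [← Polynomial.C_mul_X_pow_eq_monomial, Polynomial.mul_comp, Polynomial.C_comp,
      Polynomial.pow_comp, Polynomial.X_comp, mul_pow, ← Polynomial.C_pow]
    simp only [Polynomial.coeff_C_mul, Polynomial.coeff_X_pow, mul_ite, mul_zero, mul_one]
    by_cases h : u = n <;> simp [h] <;> ring

/-- a polynomial with multiplicative evaluations is a power of X -/
lemma eq_X_pow_of_multiplicative (f : Polynomial ℂ)
    (hmul : ∀ t s : ℂ, f.eval (t * s) = f.eval t * f.eval s) (hone : f.eval 1 = 1) :
    ∃ d : ℕ, f = Polynomial.X ^ d := by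
  classical
  have hcoeff : ∀ s : ℂ, ∀ u : ℕ, s ^ u * f.coeff u = f.eval s * f.coeff u := by
    intro s u
    have hfun : f.comp (Polynomial.C s * Polynomial.X) = Polynomial.C (f.eval s) * f := by
      apply Polynomial.funext
      intro t
      rw [Polynomial.eval_comp, Polynomial.eval_mul, Polynomial.eval_C, Polynomial.eval_X,
        Polynomial.eval_mul, Polynomial.eval_C, hmul]
    have := congrArg (fun g => Polynomial.coeff g u) hfun
    simp only [comp_C_mul_X_coeff, Polynomial.coeff_C_mul] at this; exact this
  have hsingle : ∀ u v : ℕ, u ≠ v → f.coeff u = 0 ∨ f.coeff v = 0 := by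
    intro u v huv
    by_contra hc
    push_neg at hc
    have hu : (2:ℂ) ^ u = f.eval 2 := mul_right_cancel₀ hc.1 (hcoeff 2 u)
    have hv : (2:ℂ) ^ v = f.eval 2 := mul_right_cancel₀ hc.2 (hcoeff 2 v)
    have : (2:ℂ) ^ u = (2:ℂ) ^ v := hu.trans hv.symm
    have hn : ((2^u : ℕ) : ℂ) = ((2^v : ℕ) : ℂ) := by push_cast; exact this
    have := Nat.cast_injective hn
    exact huv (Nat.pow_right_injective (le_refl 2) this)
  have hne : f ≠ 0 := fun h => by simp [h] at hone
  have hd := Polynomial.natDegree_mem_support_of_nonzero hne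
  refine ⟨f.natDegree, ?_⟩
  have hmono : f = Polynomial.C (f.coeff f.natDegree) * Polynomial.X ^ f.natDegree := by
    ext u
    rw [Polynomial.coeff_C_mul, Polynomial.coeff_X_pow]
    by_cases h : u = f.natDegree
    · simp [h]
    · rcases hsingle u f.natDegree h with h0 | h0
      · simp [h, h0]
      · exact absurd h0 (Polynomial.mem_support_iff.mp hd)
  have hlead : f.coeff f.natDegree = 1 := by
    have := hone
    rw [hmono] at this
    simpa using this
  rw [hlead] at hmono
  simpa using hmono

lemma coeff_minor_sum (S : Finset (Finset ι)) (c : Finset ι → ℂ) (r : ℕ)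
    (hr : r ≤ Fintype.card ι) :
    (∑ β ∈ S, Polynomial.X ^ (Fintype.card ι - β.card) * Polynomial.C (c β)).coeff
        (Fintype.card ι - r)
      = ∑ β ∈ S.filter (fun β => β.card = r), c β := by
  classical
  rw [Polynomial.finset_sum_coeff, Finset.sum_filter]
  refine Finset.sum_congr rfl fun β _ => ?_
  rw [mul_comm, Polynomial.C_mul_X_pow_eq_monomial, Polynomial.coeff_monomial]
  have hβ : β.card ≤ Fintype.card ι := Finset.card_le_univ β
  by_cases h : β.card = r
  · rw [if_pos (by omega), if_pos h]
  · rw [if_neg (by omega), if_neg h]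

section stab

variable {K : Type*} [Field K] {mm : ℕ}

/-- range of the `a`-th power -/
noncomputable def Rg (F : Matrix (Fin mm) (Fin mm) K) (a : ℕ) : Submodule K (Fin mm → K) :=
  LinearMap.range ((F ^ a).mulVecLin)

lemma Rg_succ_le (F : Matrix (Fin mm) (Fin mm) K) (a : ℕ) : Rg F (a+1) ≤ Rg F a := by
  unfold Rg
  rw [pow_succ, Matrix.mulVecLin_mul]
  exact LinearMap.range_comp_le_range _ _

lemma Rg_succ_eq (F : Matrix (Fin mm) (Fin mm) K) (a : ℕ) :
    Rg F (a+1) = Submodule.map (F.mulVecLin) (Rg F a) := by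
  unfold Rg
  rw [pow_succ', Matrix.mulVecLin_mul, LinearMap.range_comp]

lemma rank_eq_finrank_Rg (F : Matrix (Fin mm) (Fin mm) K) (a : ℕ) :
    (F ^ a).rank = Module.finrank K (Rg F a) := rfl

lemma Rg_stab (F : Matrix (Fin mm) (Fin mm) K) (c : ℕ)
    (h : (F^(c+1)).rank = (F^c).rank) : ∀ j, Rg F (c + j) = Rg F c := by
  have h1 : Rg F (c+1) = Rg F c := by
    apply Submodule.eq_of_le_of_finrank_le (Rg_succ_le F c)
    rw [← rank_eq_finrank_Rg, ← rank_eq_finrank_Rg, h]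
  intro j
  induction j with
  | zero => rfl
  | succ j ih =>
    rw [show c + (j+1) = (c+j)+1 from rfl, Rg_succ_eq, ih, ← Rg_succ_eq]
    exact h1

lemma Rg_eq_of_le (F : Matrix (Fin mm) (Fin mm) K) {c a b : ℕ}
    (h : (F^(c+1)).rank = (F^c).rank) (ha : c ≤ a) (hb : c ≤ b) : Rg F a = Rg F b := by
  have h1 : Rg F a = Rg F c := by
    have := Rg_stab F c h (a - c); rwa [Nat.add_sub_cancel' ha] at this
  have h2 : Rg F b = Rg F c := by
    have := Rg_stab F c h (b - c); rwa [Nat.add_sub_cancel' hb] at this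
  rw [h1, h2]

lemma rank_pow_eq_of_le (F : Matrix (Fin mm) (Fin mm) K) {c a b : ℕ}
    (h : (F^(c+1)).rank = (F^c).rank) (ha : c ≤ a) (hb : c ≤ b) :
    (F^a).rank = (F^b).rank := by
  rw [rank_eq_finrank_Rg, rank_eq_finrank_Rg, Rg_eq_of_le F h ha hb]

lemma exists_factor_of_range_le (F G : Matrix (Fin mm) (Fin mm) K)
    (h : LinearMap.range (G.mulVecLin) ≤ LinearMap.range (F.mulVecLin)) :
    ∃ U : Matrix (Fin mm) (Fin mm) K, F * U = G := by
  classical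
  choose u hu using fun j => h (LinearMap.mem_range_self G.mulVecLin (Pi.single j 1))
  refine ⟨Matrix.of (fun l j => u j l), ?_⟩
  ext i j
  rw [Matrix.mul_apply]
  have hj := congrFun (hu j) i
  simp only [Matrix.mulVecLin_apply, Matrix.mulVec_single_one, Matrix.col_apply, mul_one] at hj
  rw [← hj, Matrix.mulVec, dotProduct]
  rfl

end stab

set_option maxHeartbeats 1000000 in
lemma main_col {m n : ℕ} (k r : ℕ) (A : Matrix (Fin m) (Fin n) ℂ) (W : Matrix (Fin n) (Fin m) ℂ)
    (hr : ((A * W) ^ k).rank = r)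
    (X : Matrix (Fin m) (Fin n) ℂ)
    (h1 : (A * W) ^ (k + 1) * X * W = (A * W) ^ k)
    (h2 : X * W * A * W * X = X)
    (h3 : A * W * X = X * W * A)
    (i : Fin m) (j : Fin n) :
    X i j =
      (∑ β ∈ (Finset.powersetCard r (Finset.univ : Finset (Fin m))).filter (fun β => i ∈ β),
        mino (((A * W) ^ (k + 2)).updateCol i (fun l => ((A * W) ^ k * A) l j)) β) /
      (∑ β ∈ Finset.powersetCard r (Finset.univ : Finset (Fin m)),
        mino ((A * W) ^ (k + 2)) β) := by
  classical
  -- abbreviations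
  have hBD : A * W * (X * W) = X * W * (A * W) := by
    calc A * W * (X * W) = A * W * X * W := by rw [← Matrix.mul_assoc]
    _ = X * W * A * W := by rw [h3]
    _ = X * W * (A * W) := by rw [Matrix.mul_assoc]
  have hDBD : X * W * (A * W) * (X * W) = X * W := by
    calc X * W * (A * W) * (X * W) = X * W * A * W * (X * W) := by
          rw [← Matrix.mul_assoc (X*W) A W]
    _ = X * W * A * W * X * W := by rw [← Matrix.mul_assoc]
    _ = X * W := by rw [h2]
  have hBkD : (A * W) ^ (k + 1) * (X * W) = (A * W) ^ k := by
    rw [← Matrix.mul_assoc, h1]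
  -- commutation of powers
  have hcomm : Commute (A * W) (X * W) := hBD
  have hcommPk : ∀ a b : ℕ, (A*W)^a * (X*W)^b = (X*W)^b * (A*W)^a :=
    fun a b => (hcomm.pow_pow a b).eq
  set B := A * W with hB
  set D := X * W with hD
  set P := B * D with hP
  set Q := (1 : Matrix (Fin m) (Fin m) ℂ) - P with hQ
  set M := B ^ (k + 2) with hM
  set G := D ^ (k + 2) with hG
  have hP2 : P * P = P := by
    rw [hP]
    calc B * D * (B * D) = B * (D * (B * D)) := Matrix.mul_assoc _ _ _
    _ = B * (D * B * D) := by rw [← Matrix.mul_assoc D B D]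
    _ = B * D := by rw [hDBD]
  have hPQ : P * Q = 0 := by rw [hQ, Matrix.mul_sub, Matrix.mul_one, hP2, sub_self]
  have hQP : Q * P = 0 := by rw [hQ, Matrix.sub_mul, Matrix.one_mul, hP2, sub_self]
  have hQ2 : Q * Q = Q := by
    rw [hQ, Matrix.sub_mul, Matrix.one_mul, Matrix.mul_sub, Matrix.mul_one, hP2, sub_self,
      sub_zero]
  have hpowB : ∀ a b c : ℕ, a + b = c → B ^ a * B ^ b = B ^ c := by
    intro a b c h; rw [← pow_add, h]
  have hMD : M * D = B ^ (k + 1) := by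
    rw [hM, pow_succ' B (k+1), Matrix.mul_assoc, hBkD, ← pow_succ']
  have hMDD : M * D * D = B ^ k := by rw [hMD, hBkD]
  have hMB : M * B = B ^ (k + 3) := by rw [hM, ← pow_succ]
  have hMP : M * P = M := by
    rw [hP, ← Matrix.mul_assoc, hMB,
      show B ^ (k+3) = B ^ 2 * B ^ (k+1) from by rw [← pow_add]; congr 1; omega,
      Matrix.mul_assoc, hBkD, hM]
    rw [← pow_add]; congr 1; omega
  have hcommPM : Commute P M := by
    rw [hP, hM]
    exact Commute.mul_left ((Commute.refl B).pow_right _) ((hcomm.symm).pow_right _)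
  have hPM : P * M = M := by rw [hcommPM.eq, hMP]
  have hPpow : ∀ s : ℕ, P ^ (s + 1) = P := by
    intro s; induction s with
    | zero => rw [pow_one]
    | succ s ih => rw [pow_succ, ih, hP2]
  have hMG : M * G = P := by
    rw [hM, hG, ← hcomm.mul_pow, ← hP, show k + 2 = (k+1)+1 from rfl, hPpow]
  have hGP : G * P = G := by
    rw [hG, hP, pow_succ D (k+1), Matrix.mul_assoc (D^(k+1)) D (B*D),
      ← Matrix.mul_assoc D B D, hDBD, ← pow_succ]
  have hcommPG : Commute P G := by
    rw [hP, hG]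
    exact Commute.mul_left (hcomm.pow_right _) ((Commute.refl D).pow_right _)
  have hPG : P * G = G := by rw [hcommPG.eq, hGP]
  have hMQ : M * Q = 0 := by rw [hQ, Matrix.mul_sub, Matrix.mul_one, hMP, sub_self]
  have hQG : Q * G = 0 := by rw [hQ, Matrix.sub_mul, Matrix.one_mul, hPG, sub_self]
  have hinv : (M + Q) * (G + Q) = 1 := by
    rw [Matrix.add_mul, Matrix.mul_add, Matrix.mul_add, hMG, hMQ, hQG, hQ2, add_zero, zero_add,
      hQ]
    abel
  -- ranks
  have hrm : r ≤ m := by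
    have := Matrix.rank_le_card_height (B ^ k)
    rw [hr, Fintype.card_fin] at this
    exact this
  have hrankM : M.rank = r := by
    refine le_antisymm ?_ ?_
    · rw [hM, show B ^ (k+2) = B ^ k * B ^ 2 from by rw [← pow_add]]
      rw [← hr]; exact Matrix.rank_mul_le_left _ _
    · rw [← hr, ← hMDD]
      exact le_trans (Matrix.rank_mul_le_left _ _) (Matrix.rank_mul_le_left _ _)
  have hrankP : P.rank = r := by
    refine le_antisymm ?_ ?_
    · rw [← hrankM, ← hMG]; exact Matrix.rank_mul_le_left _ _
    · rw [← hrankM]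
      conv_lhs => rw [← hMP]
      exact Matrix.rank_mul_le_right _ _
  have hkerQ : LinearMap.ker Q.mulVecLin = LinearMap.range P.mulVecLin := by
    ext v
    simp only [LinearMap.mem_ker, LinearMap.mem_range, Matrix.mulVecLin_apply]
    constructor
    · intro hv
      refine ⟨v, ?_⟩
      have hv' : Q *ᵥ v = v - P *ᵥ v := by
        rw [hQ, Matrix.sub_mulVec, Matrix.one_mulVec]
      rw [hv'] at hv
      exact (sub_eq_zero.mp hv).symm
    · rintro ⟨u, rfl⟩
      rw [Matrix.mulVec_mulVec, hQP, Matrix.zero_mulVec]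
  have hrankQ : Q.rank = m - r := by
    have hrn := LinearMap.finrank_range_add_finrank_ker (Q.mulVecLin)
    rw [hkerQ] at hrn
    have e1 : Q.rank = Module.finrank ℂ (LinearMap.range Q.mulVecLin) := rfl
    have e2 : P.rank = Module.finrank ℂ (LinearMap.range P.mulVecLin) := rfl
    rw [← e1, ← e2, hrankP, Module.finrank_fintype_fun_eq_card, Fintype.card_fin] at hrn
    omega
  -- step 1
  have hMX : M * X = B ^ k * A := by
    rw [hM, pow_succ B (k+1), Matrix.mul_assoc, h3, ← Matrix.mul_assoc, hBkD]
  -- X factors through high powers of B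
  have hXs : ∀ s : ℕ, X = B ^ s * (X * (W * X) ^ s) := by
    intro s
    induction s with
    | zero => rw [pow_zero, pow_zero, Matrix.mul_one, Matrix.one_mul]
    | succ s ih =>
      have hkey : X = B * (X * (W * X)) := by
        calc X = D * A * W * X := h2.symm
        _ = D * A * (W * X) := by rw [Matrix.mul_assoc (D * A) W X]
        _ = B * X * (W * X) := by rw [← h3]
        _ = B * (X * (W * X)) := by rw [Matrix.mul_assoc B X (W * X)]
      calc X = B ^ s * (X * (W * X) ^ s) := ih
      _ = B ^ s * (B * (X * (W * X)) * (W * X) ^ s) := by rw [← hkey]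
      _ = B ^ s * (B * (X * (W * X) * (W * X) ^ s)) := by rw [Matrix.mul_assoc B _ _]
      _ = B ^ s * B * (X * (W * X) * (W * X) ^ s) := by rw [← Matrix.mul_assoc]
      _ = B ^ (s + 1) * (X * ((W * X) * (W * X) ^ s)) := by rw [← pow_succ, Matrix.mul_assoc X]
      _ = B ^ (s + 1) * (X * (W * X) ^ (s + 1)) := by rw [← pow_succ']
  set Y := X * (W * X) ^ ((k+2)*m) with hY
  have hXY : X = M ^ m * Y := by
    rw [hM, ← pow_mul, hY]
    exact hXs ((k+2)*m)
  -- now pass to polynomials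
  set Mp : Matrix (Fin m) (Fin m) (Polynomial ℂ) := M.map Polynomial.C with hMp
  set Pp : Matrix (Fin m) (Fin m) (Polynomial ℂ) := P.map Polynomial.C with hPp
  set Qp : Matrix (Fin m) (Fin m) (Polynomial ℂ) := Q.map Polynomial.C with hQp
  have hmapadd : ∀ (E F : Matrix (Fin m) (Fin m) ℂ),
      (E + F).map Polynomial.C = E.map Polynomial.C + F.map Polynomial.C := by
    intro E F; ext l c; simp [Matrix.map_apply, Matrix.add_apply]
  have hmapsub : ∀ (E F : Matrix (Fin m) (Fin m) ℂ),
      (E - F).map Polynomial.C = E.map Polynomial.C - F.map Polynomial.C := by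
    intro E F; ext l c; simp [Matrix.map_apply, Matrix.sub_apply]
  have hmapone : (1 : Matrix (Fin m) (Fin m) ℂ).map Polynomial.C = 1 := by
    ext l c
    rw [Matrix.map_apply, Matrix.one_apply, Matrix.one_apply]
    by_cases h : l = c
    · rw [if_pos h, if_pos h, Polynomial.C_1]
    · rw [if_neg h, if_neg h, Polynomial.C_0]
  have hmapzero : (0 : Matrix (Fin m) (Fin m) ℂ).map Polynomial.C = 0 := by
    ext l c
    rw [Matrix.map_apply, Matrix.zero_apply, Matrix.zero_apply, Polynomial.C_0]
  set N : Matrix (Fin m) (Fin m) (Polynomial ℂ) := Mp + (Polynomial.X : Polynomial ℂ) • 1 with hN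
  set p := N.det with hp
  set er := ∑ β ∈ Finset.powersetCard r (Finset.univ : Finset (Fin m)), mino M β with her
  have hdet_eval : ∀ (g : Matrix (Fin m) (Fin m) (Polynomial ℂ)) (t : ℂ),
      Polynomial.eval t g.det = (g.map (Polynomial.eval t)).det := by
    intro g t
    rw [← Polynomial.coe_evalRingHom, RingHom.map_det, RingHom.mapMatrix_apply]
  have hEvalMat : ∀ (t : ℂ) (E F : Matrix (Fin m) (Fin m) ℂ),
      ((E.map Polynomial.C + (Polynomial.X : Polynomial ℂ) • F.map Polynomial.C).map (Polynomial.eval t))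
        = E + t • F := by
    intro t E F
    ext l c
    rw [Matrix.map_apply, Matrix.add_apply, Matrix.map_apply, Matrix.smul_apply,
      Matrix.map_apply, smul_eq_mul, Polynomial.eval_add, Polynomial.eval_C,
      Polynomial.eval_mul, Polynomial.eval_X, Polynomial.eval_C,
      Matrix.add_apply, Matrix.smul_apply, smul_eq_mul]
  -- expansion of p and its (m-r) coefficient
  have hpexp : p = ∑ β ∈ Finset.univ.powerset,
      Polynomial.X ^ (m - β.card) * Polynomial.C (mino M β) := by
    rw [hp, hN, det_add_smul_one]
    refine Finset.sum_congr rfl fun β _ => ?_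
    rw [hMp, mino_map, Fintype.card_fin]
  have hcoeffp : p.coeff (m - r) = er := by
    have hcs := coeff_minor_sum (ι := Fin m) Finset.univ.powerset (fun β => mino M β) r
      (by rw [Fintype.card_fin]; exact hrm)
    rw [Fintype.card_fin] at hcs
    rw [hpexp, hcs, her]
    congr 1
    rw [Finset.powersetCard_eq_filter]
  -- h2p and h3p are monomials
  set h2p := (Pp + (Polynomial.X : Polynomial ℂ) • Qp).det with hh2p
  set h3p := (Qp + (Polynomial.X : Polynomial ℂ) • Pp).det with hh3p
  have hPtQ : ∀ t s : ℂ, (P + t • Q) * (P + s • Q) = P + (t * s) • Q := by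
    intro t s
    rw [Matrix.add_mul, Matrix.mul_add, Matrix.mul_add, Matrix.smul_mul, Matrix.mul_smul,
      Matrix.mul_smul, Matrix.smul_mul, hP2, hPQ, hQP, hQ2, smul_zero, smul_smul, mul_comm s t,
      smul_zero, zero_add, add_zero]
  have hQtP : ∀ t s : ℂ, (Q + t • P) * (Q + s • P) = Q + (t * s) • P := by
    intro t s
    rw [Matrix.add_mul, Matrix.mul_add, Matrix.mul_add, Matrix.smul_mul, Matrix.mul_smul,
      Matrix.mul_smul, Matrix.smul_mul, hQ2, hQP, hPQ, hP2, smul_zero, smul_smul, mul_comm s t,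
      smul_zero, zero_add, add_zero]
  have hmul2 : ∀ t s : ℂ, h2p.eval (t * s) = h2p.eval t * h2p.eval s := by
    intro t s
    rw [hh2p, hdet_eval, hdet_eval, hdet_eval, hPp, hQp, hEvalMat, hEvalMat, hEvalMat,
      ← hPtQ t s, Matrix.det_mul]
  have hone2 : h2p.eval 1 = 1 := by
    rw [hh2p, hdet_eval, hPp, hQp, hEvalMat, one_smul, hQ,
      show P + (1 - P) = (1 : Matrix (Fin m) (Fin m) ℂ) from by abel, Matrix.det_one]
  have hmul3 : ∀ t s : ℂ, h3p.eval (t * s) = h3p.eval t * h3p.eval s := by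
    intro t s
    rw [hh3p, hdet_eval, hdet_eval, hdet_eval, hPp, hQp, hEvalMat, hEvalMat, hEvalMat,
      ← hQtP t s, Matrix.det_mul]
  have hone3 : h3p.eval 1 = 1 := by
    rw [hh3p, hdet_eval, hPp, hQp, hEvalMat, one_smul, hQ,
      show (1 - P) + P = (1 : Matrix (Fin m) (Fin m) ℂ) from by abel, Matrix.det_one]
  obtain ⟨d2, hd2⟩ := eq_X_pow_of_multiplicative h2p hmul2 hone2
  obtain ⟨d3, hd3⟩ := eq_X_pow_of_multiplicative h3p hmul3 hone3
  have hPQ1 : P + Q = (1 : Matrix (Fin m) (Fin m) ℂ) := by rw [hQ]; abel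
  have hprod23 : h2p * h3p = Polynomial.X ^ m := by
    rw [hh2p, hh3p, ← Matrix.det_mul]
    have hfac2 : (Pp + (Polynomial.X : Polynomial ℂ) • Qp) * (Qp + (Polynomial.X : Polynomial ℂ) • Pp)
        = (Polynomial.X : Polynomial ℂ) • (1 : Matrix (Fin m) (Fin m) (Polynomial ℂ)) := by
      rw [Matrix.add_mul, Matrix.mul_add, Matrix.mul_add, Matrix.smul_mul, Matrix.smul_mul,
        Matrix.mul_smul, Matrix.mul_smul, smul_smul, hPp, hQp, ← Matrix.map_mul,
        ← Matrix.map_mul, ← Matrix.map_mul, ← Matrix.map_mul, hPQ, hQP, hP2, hQ2]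
      rw [hmapzero, smul_zero, zero_add, add_zero,
        ← smul_add, ← hmapadd, hPQ1, hmapone]
    rw [hfac2, Matrix.det_smul, Matrix.det_one, mul_one, Fintype.card_fin]
  have hd23 : d2 + d3 = m := by
    have h := hprod23
    rw [hd2, hd3, ← pow_add] at h
    have := congrArg Polynomial.natDegree h
    rwa [Polynomial.natDegree_X_pow, Polynomial.natDegree_X_pow] at this
  have hdvd_mino : ∀ (Z : Matrix (Fin m) (Fin m) ℂ) (s : ℕ), Z.rank = s →
      (Polynomial.X : Polynomial ℂ) ^ (m - s) ∣
        ((Z.map Polynomial.C - (Polynomial.X : Polynomial ℂ) • Z.map Polynomial.C) + (Polynomial.X : Polynomial ℂ) • 1).det := by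
    intro Z s hZ
    rw [det_add_smul_one]
    apply Finset.dvd_sum
    intro β _
    have hZsm : Z.map Polynomial.C - (Polynomial.X : Polynomial ℂ) • Z.map Polynomial.C
        = ((1 : Polynomial ℂ) - Polynomial.X) • Z.map Polynomial.C := by
      rw [sub_smul, one_smul]
    rw [hZsm, mino_smul, mino_map]
    by_cases hc : β.card ≤ s
    · have hβm : β.card ≤ m := by
        have := Finset.card_le_univ β
        simpa using this
      refine Dvd.dvd.mul_right ?_ _
      rw [Fintype.card_fin]
      exact pow_dvd_pow _ (by omega)
    · have hz : mino Z β = 0 := mino_eq_zero_of_rank_lt Z β (by omega)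
      rw [hz, map_zero, mul_zero, mul_zero]
      exact dvd_zero _
  have hd2ge : m - r ≤ d2 := by
    have hdvd : (Polynomial.X : Polynomial ℂ) ^ (m - r) ∣ h2p := by
      have hrw : Pp + (Polynomial.X : Polynomial ℂ) • Qp
          = (P.map Polynomial.C - (Polynomial.X : Polynomial ℂ) • P.map Polynomial.C) + (Polynomial.X : Polynomial ℂ) • 1 := by
        rw [hPp, hQp, hQ, hmapsub, hmapone, smul_sub]
        abel
      rw [hh2p, hrw]
      exact hdvd_mino P r hrankP
    by_contra hlt
    push_neg at hlt
    rw [hd2] at hdvd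
    have := (Polynomial.X_pow_dvd_iff.mp hdvd) d2 hlt
    rw [Polynomial.coeff_X_pow, if_pos rfl] at this
    exact one_ne_zero this
  have hd3ge : r ≤ d3 := by
    have hdvd : (Polynomial.X : Polynomial ℂ) ^ r ∣ h3p := by
      have hrw : Qp + (Polynomial.X : Polynomial ℂ) • Pp
          = (Q.map Polynomial.C - (Polynomial.X : Polynomial ℂ) • Q.map Polynomial.C) + (Polynomial.X : Polynomial ℂ) • 1 := by
        rw [hPp, hQp, hQ, hmapsub, hmapone, smul_sub]
        abel
      rw [hh3p, hrw]
      have := hdvd_mino Q (m - r) hrankQ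
      rwa [show m - (m - r) = r from by omega] at this
    by_contra hlt
    push_neg at hlt
    rw [hd3] at hdvd
    have := (Polynomial.X_pow_dvd_iff.mp hdvd) d3 hlt
    rw [Polynomial.coeff_X_pow, if_pos rfl] at this
    exact one_ne_zero this
  have hd2eq : d2 = m - r := by omega
  -- factorization of p
  set h1p := (Mp + (Polynomial.X : Polynomial ℂ) • Pp + Qp).det with hh1p
  have hfacp : p = h1p * h2p := by
    rw [hp, hh1p, hh2p, ← Matrix.det_mul]
    congr 1
    rw [Matrix.add_mul, Matrix.add_mul, Matrix.mul_add, Matrix.mul_add, Matrix.mul_add,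
      Matrix.smul_mul, Matrix.smul_mul, Matrix.mul_smul, Matrix.mul_smul, Matrix.mul_smul,
      smul_smul, hMp, hPp, hQp, ← Matrix.map_mul, ← Matrix.map_mul, ← Matrix.map_mul,
      ← Matrix.map_mul, ← Matrix.map_mul, ← Matrix.map_mul, hMP, hMQ, hP2, hPQ, hQP, hQ2]
    rw [hmapzero, smul_zero, smul_zero, add_zero, add_zero,
      zero_add, hN]
    rw [add_assoc, ← smul_add, ← hmapadd, hPQ1, hmapone]
  have her_eq : er = h1p.coeff 0 := by
    rw [← hcoeffp, hfacp, hd2, hd2eq, Polynomial.coeff_mul_X_pow', if_pos (le_refl _),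
      Nat.sub_self]
  have hh1p0 : h1p.coeff 0 ≠ 0 := by
    rw [Polynomial.coeff_zero_eq_eval_zero, hh1p, hdet_eval]
    have hmapped : (Mp + (Polynomial.X : Polynomial ℂ) • Pp + Qp).map (Polynomial.eval 0) = M + Q := by
      have e1 : Mp + (Polynomial.X : Polynomial ℂ) • Pp + Qp
          = (M + Q).map Polynomial.C + (Polynomial.X : Polynomial ℂ) • P.map Polynomial.C := by
        rw [hMp, hPp, hQp, hmapadd]; abel
      rw [e1, hEvalMat, zero_smul, add_zero]
    rw [hmapped]
    intro hdet0
    have := congrArg Matrix.det hinv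
    rw [Matrix.det_mul, hdet0, zero_mul, Matrix.det_one] at this
    exact zero_ne_one this
  have her_ne : er ≠ 0 := her_eq ▸ hh1p0
  -- master equation
  set adjN := N.adjugate with hadjdef
  have hadjN : adjN * N = p • 1 := Matrix.adjugate_mul N
  set Xp := X.map Polynomial.C with hXp
  set bb : Fin m → Polynomial ℂ := fun l => Polynomial.C ((B ^ k * A) l j) with hbb
  have hNX : N * Xp = (B ^ k * A).map Polynomial.C + (Polynomial.X : Polynomial ℂ) • Xp := by
    rw [hN, Matrix.add_mul, hMp, hXp, ← Matrix.map_mul, hMX, Matrix.smul_mul, Matrix.one_mul]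
  have hmaster : p • Xp = adjN * ((B ^ k * A).map Polynomial.C) + (Polynomial.X : Polynomial ℂ) • (adjN * Xp) := by
    calc p • Xp = (p • (1 : Matrix (Fin m) (Fin m) (Polynomial ℂ))) * Xp := by
          rw [Matrix.smul_mul, Matrix.one_mul]
    _ = adjN * (N * Xp) := by rw [← hadjN, Matrix.mul_assoc]
    _ = _ := by rw [hNX, Matrix.mul_add, Matrix.mul_smul]
  set nump := (N.updateCol i bb).det with hnump
  have hentry : (adjN * ((B ^ k * A).map Polynomial.C)) i j = nump := by
    have hcr := Matrix.cramer_eq_adjugate_mulVec N bb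
    have hcol : (adjN * ((B ^ k * A).map Polynomial.C)) i j = (adjN *ᵥ bb) i := rfl
    rw [hcol, hadjdef, ← congrFun hcr i, Matrix.cramer_apply, hnump]
  -- numerator expansion
  have hcolmap : Mp.updateCol i bb
      = (M.updateCol i (fun l => (B ^ k * A) l j)).map Polynomial.C := by
    ext l c
    by_cases h : c = i
    · subst h
      rw [Matrix.updateCol_self, Matrix.map_apply, Matrix.updateCol_self, hbb]
    · rw [Matrix.updateCol_ne h, Matrix.map_apply, Matrix.updateCol_ne h, hMp,
        Matrix.map_apply]
  have hnump_exp : nump = ∑ β ∈ Finset.univ.powerset.filter (fun β : Finset (Fin m) => i ∈ β),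
      Polynomial.X ^ (m - β.card)
        * Polynomial.C (mino (M.updateCol i (fun l => (B ^ k * A) l j)) β) := by
    rw [hnump, hN, det_updateCol_add_smul_one]
    refine Finset.sum_congr rfl fun β _ => ?_
    rw [hcolmap, mino_map, Fintype.card_fin]
  have hnum_coeff : nump.coeff (m - r)
      = ∑ β ∈ (Finset.powersetCard r (Finset.univ : Finset (Fin m))).filter (fun β => i ∈ β),
          mino (M.updateCol i (fun l => (B ^ k * A) l j)) β := by
    rw [hnump_exp]
    have hcs := coeff_minor_sum (ι := Fin m)
      (Finset.univ.powerset.filter (fun β : Finset (Fin m) => i ∈ β))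
      (fun β => mino (M.updateCol i (fun l => (B ^ k * A) l j)) β) r
      (by rw [Fintype.card_fin]; exact hrm)
    rw [Fintype.card_fin] at hcs
    rw [hcs]
    congr 1
    rw [Finset.powersetCard_eq_filter, Finset.filter_filter, Finset.filter_filter]
    ext x
    simp only [Finset.mem_filter, Finset.mem_powerset]
    tauto
  -- remainder analysis
  have hMpow : Xp = Mp ^ m * (Y.map Polynomial.C) := by
    rw [hXp]
    conv_lhs => rw [hXY]
    rw [Matrix.map_mul]
    congr 1
    rw [hMp, ← RingHom.mapMatrix_apply, ← RingHom.mapMatrix_apply, map_pow]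
  have hind : ∀ l : ℕ, ∃ S : Matrix (Fin m) (Fin m) (Polynomial ℂ),
      adjN * Mp ^ l = p • S + ((-Polynomial.X : Polynomial ℂ) ^ l) • adjN := by
    intro l
    induction l with
    | zero =>
      exact ⟨0, by rw [pow_zero, Matrix.mul_one, pow_zero, one_smul, smul_zero, zero_add]⟩
    | succ l ih =>
      obtain ⟨S, hS⟩ := ih
      refine ⟨S * Mp + ((-Polynomial.X : Polynomial ℂ) ^ l) • 1, ?_⟩
      have hadjM : adjN * Mp = p • 1 - (Polynomial.X : Polynomial ℂ) • adjN := by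
        have hMpN : Mp = N - (Polynomial.X : Polynomial ℂ) • 1 := by rw [hN]; abel
        rw [hMpN, Matrix.mul_sub, hadjN, Matrix.mul_smul, Matrix.mul_one]
      calc adjN * Mp ^ (l + 1) = adjN * Mp ^ l * Mp := by rw [pow_succ, Matrix.mul_assoc]
      _ = (p • S + ((-Polynomial.X : Polynomial ℂ) ^ l) • adjN) * Mp := by rw [hS]
      _ = p • (S * Mp) + ((-Polynomial.X : Polynomial ℂ) ^ l) • (adjN * Mp) := by
          rw [Matrix.add_mul, Matrix.smul_mul, Matrix.smul_mul]
      _ = p • (S * Mp) + (((-Polynomial.X : Polynomial ℂ) ^ l) • (p • 1)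
            - ((-Polynomial.X : Polynomial ℂ) ^ l) • ((Polynomial.X : Polynomial ℂ) • adjN)) := by
          rw [hadjM, smul_sub]
      _ = p • (S * Mp + ((-Polynomial.X : Polynomial ℂ) ^ l) • 1)
            + ((-Polynomial.X : Polynomial ℂ) ^ (l + 1)) • adjN := by
          module
      _ = _ := rfl
  obtain ⟨S, hSm⟩ := hind m
  set Yp := Y.map Polynomial.C with hYp
  have hadjXp : adjN * Xp = p • (S * Yp)
      + ((-Polynomial.X : Polynomial ℂ) ^ m) • (adjN * Yp) := by
    rw [hMpow, ← Matrix.mul_assoc, hSm, Matrix.add_mul, Matrix.smul_mul, Matrix.smul_mul]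
  have hrem : (((Polynomial.X : Polynomial ℂ) • (adjN * Xp)) i j).coeff (m - r) = 0 := by
    rw [Matrix.smul_apply, hadjXp, Matrix.add_apply, Matrix.smul_apply, Matrix.smul_apply,
      smul_eq_mul, smul_eq_mul, smul_eq_mul, mul_add]
    have e1 : Polynomial.X * (p * ((S * Yp) i j))
        = Polynomial.X ^ (m - r) * (Polynomial.X * (h1p * ((S * Yp) i j))) := by
      rw [hfacp, hd2, hd2eq]; ring
    have e2 : Polynomial.X * ((-Polynomial.X : Polynomial ℂ) ^ m * ((adjN * Yp) i j))
        = Polynomial.X ^ (m + 1) * (((-1 : Polynomial ℂ)) ^ m * ((adjN * Yp) i j)) := by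
      rw [neg_pow]; ring
    have c1 : (Polynomial.X ^ (m - r)
        * (Polynomial.X * (h1p * ((S * Yp) i j)))).coeff (m - r) = 0 := by
      rw [Polynomial.coeff_X_pow_mul', if_pos (le_refl _), Nat.sub_self,
        Polynomial.mul_coeff_zero, Polynomial.coeff_X_zero, zero_mul]
    have c2 : (Polynomial.X ^ (m + 1)
        * (((-1 : Polynomial ℂ)) ^ m * ((adjN * Yp) i j))).coeff (m - r) = 0 :=
      Polynomial.X_pow_dvd_iff.mp (dvd_mul_right _ _) (m - r) (by omega)
    rw [Polynomial.coeff_add, e1, e2, c1, c2, add_zero]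
  -- put it together
  have hmain_entry : p * Polynomial.C (X i j)
      = nump + ((Polynomial.X : Polynomial ℂ) • (adjN * Xp)) i j := by
    have hl : (p • Xp) i j = p * Polynomial.C (X i j) := by
      rw [Matrix.smul_apply, hXp, Matrix.map_apply, smul_eq_mul]
    have hraw : (p • Xp) i j = (adjN * ((B ^ k * A).map Polynomial.C)) i j
        + ((Polynomial.X : Polynomial ℂ) • (adjN * Xp)) i j := by
      rw [hmaster, Matrix.add_apply]
    rw [← hl, hraw, hentry]
  have hfinal : er * X i j = nump.coeff (m - r) := by
    have hc := congrArg (fun q : Polynomial ℂ => q.coeff (m - r)) hmain_entry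
    simp only [Polynomial.coeff_add, Polynomial.coeff_mul_C] at hc
    rw [hcoeffp, hrem, add_zero] at hc
    rw [← hc, mul_comm]
  rw [hnum_coeff] at hfinal
  rw [eq_div_iff her_ne, mul_comm]
  exact hfinal

lemma mino_transpose {ι : Type*} [DecidableEq ι] [Fintype ι] (E : Matrix ι ι ℂ) (β : Finset ι) :
    mino (Eᵀ) β = mino E β := by
  unfold mino
  rw [← Matrix.transpose_submatrix, Matrix.det_transpose]

lemma X_factor {m n : ℕ} (A : Matrix (Fin m) (Fin n) ℂ) (W : Matrix (Fin n) (Fin m) ℂ)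
    (X : Matrix (Fin m) (Fin n) ℂ) (h2 : X * W * A * W * X = X) (h3 : A * W * X = X * W * A) :
    ∀ s : ℕ, X = (A * W) ^ s * (X * (W * X) ^ s) := by
  intro s
  induction s with
  | zero => rw [pow_zero, pow_zero, Matrix.mul_one, Matrix.one_mul]
  | succ s ih =>
    have hkey : X = (A * W) * (X * (W * X)) := by
      calc X = X * W * A * W * X := h2.symm
      _ = X * W * A * (W * X) := by rw [Matrix.mul_assoc (X * W * A) W X]
      _ = A * W * X * (W * X) := by rw [← h3]
      _ = A * W * (X * (W * X)) := by rw [Matrix.mul_assoc (A * W) X (W * X)]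
    calc X = (A*W) ^ s * (X * (W * X) ^ s) := ih
    _ = (A*W) ^ s * ((A*W) * (X * (W * X)) * (W * X) ^ s) := by rw [← hkey]
    _ = (A*W) ^ s * ((A*W) * (X * (W * X) * (W * X) ^ s)) := by rw [Matrix.mul_assoc (A*W) _ _]
    _ = (A*W) ^ s * (A*W) * (X * (W * X) * (W * X) ^ s) := by rw [← Matrix.mul_assoc]
    _ = (A*W) ^ (s+1) * (X * ((W * X) * (W * X) ^ s)) := by rw [← pow_succ, Matrix.mul_assoc X]
    _ = (A*W) ^ (s+1) * (X * (W * X) ^ (s+1)) := by rw [← pow_succ']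

lemma swap_pow {m n : ℕ} (A : Matrix (Fin m) (Fin n) ℂ) (W : Matrix (Fin n) (Fin m) ℂ) :
    ∀ s : ℕ, (A * W) ^ (s + 1) = A * ((W * A) ^ s * W) := by
  intro s
  induction s with
  | zero => rw [pow_zero, Matrix.one_mul, pow_one]
  | succ s ih =>
    calc (A*W)^(s+1+1) = (A*W)^(s+1) * (A*W) := pow_succ _ _
    _ = A * ((W*A)^s * W) * (A * W) := by rw [ih]
    _ = A * ((W*A)^s * W * (A * W)) := by rw [Matrix.mul_assoc A _ _]
    _ = A * ((W*A)^s * W * A * W) := by rw [← Matrix.mul_assoc ((W*A)^s * W) A W]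
    _ = A * ((W*A)^s * (W * A) * W) := by rw [Matrix.mul_assoc ((W*A)^s) W A]
    _ = A * ((W*A)^(s+1) * W) := by rw [← pow_succ]

lemma swapW {m n : ℕ} (A : Matrix (Fin m) (Fin n) ℂ) (W : Matrix (Fin n) (Fin m) ℂ) :
    ∀ s : ℕ, W * (A * W) ^ s = (W * A) ^ s * W := by
  intro s
  induction s with
  | zero => rw [pow_zero, pow_zero, Matrix.mul_one, Matrix.one_mul]
  | succ s ih =>
    calc W * (A*W)^(s+1) = W * ((A*W)^s * (A*W)) := by rw [pow_succ]
    _ = W * (A*W)^s * (A*W) := by rw [← Matrix.mul_assoc]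
    _ = (W*A)^s * W * (A * W) := by rw [ih]
    _ = (W*A)^s * (W * (A * W)) := Matrix.mul_assoc _ _ _
    _ = (W*A)^s * (W * A * W) := by rw [← Matrix.mul_assoc W A W]
    _ = (W*A)^s * (W * A) * W := by rw [← Matrix.mul_assoc]
    _ = (W*A)^(s+1) * W := by rw [← pow_succ]


set_option maxHeartbeats 1000000 in
/-- Determinantal representations of the W-weighted Drazin inverse
`X = A_{d,W}` (characterized by `(AW)^{k+1} X W = (AW)^k`, `XWAWX = X`, `AWX = XWA`) of
`A ∈ ℂ^{m×n}` with respect to `W ∈ ℂ^{n×m}`, where `k = max (Ind (AW)) (Ind (WA))` and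
`rank ((AW)^k) = r`, via `V̄^k = (AW)^k A` and `Ū^k = A (WA)^k`. -/
theorem weightedDrazinInverse_entry_det_repr
    (m n k₁ k₂ k r : ℕ) (A : Matrix (Fin m) (Fin n) ℂ) (W : Matrix (Fin n) (Fin m) ℂ)
    (hk₁ : IsLeast {j : ℕ | ((A * W) ^ (j + 1)).rank = ((A * W) ^ j).rank} k₁)
    (hk₂ : IsLeast {j : ℕ | ((W * A) ^ (j + 1)).rank = ((W * A) ^ j).rank} k₂)
    (hk : k = max k₁ k₂)
    (hr : (((A * W) ^ k)).rank = r)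
    (X : Matrix (Fin m) (Fin n) ℂ)
    (h1 : (A * W) ^ (k + 1) * X * W = (A * W) ^ k)
    (h2 : X * W * A * W * X = X)
    (h3 : A * W * X = X * W * A)
    (i : Fin m) (j : Fin n) :
    X i j =
      (∑ β ∈ (Finset.powersetCard r (Finset.univ : Finset (Fin m))).filter
          (fun β => i ∈ β),
        (((A * W) ^ (k + 2)).updateCol i (fun l => ((A * W) ^ k * A) l j)).pminor β) /
      (∑ β ∈ Finset.powersetCard r (Finset.univ : Finset (Fin m)),
        ((A * W) ^ (k + 2)).pminor β) ∧
    X i j =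
      (∑ α ∈ (Finset.powersetCard r (Finset.univ : Finset (Fin n))).filter
          (fun α => j ∈ α),
        (((W * A) ^ (k + 2)).updateRow j (fun l => (A * (W * A) ^ k) i l)).pminor α) /
      (∑ α ∈ Finset.powersetCard r (Finset.univ : Finset (Fin n)),
        ((W * A) ^ (k + 2)).pminor α) := by
  classical
  have hpm1 : ∀ (E : Matrix (Fin m) (Fin m) ℂ) (β : Finset (Fin m)), E.pminor β = mino E β :=
    fun _ _ => rfl
  have hpm2 : ∀ (E : Matrix (Fin n) (Fin n) ℂ) (β : Finset (Fin n)), E.pminor β = mino E β :=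
    fun _ _ => rfl
  constructor
  · have hmc := main_col k r A W hr X h1 h2 h3 i j
    simpa only [hpm1] using hmc
  · -- preparation: rank of (WA)^k
    have hk1le : k₁ ≤ k := hk ▸ le_max_left _ _
    have hk2le : k₂ ≤ k := hk ▸ le_max_right _ _
    have hst1 : ((A*W)^(k+1)).rank = ((A*W)^k).rank :=
      rank_pow_eq_of_le (A*W) hk₁.1 (le_trans hk1le (Nat.le_succ k)) hk1le
    have hst2 : ((W*A)^(k+1)).rank = ((W*A)^k).rank :=
      rank_pow_eq_of_le (W*A) hk₂.1 (le_trans hk2le (Nat.le_succ k)) hk2le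
    have hle1 : ((A*W)^(k+1)).rank ≤ ((W*A)^k).rank := by
      rw [swap_pow A W k]
      exact le_trans (Matrix.rank_mul_le_right _ _) (Matrix.rank_mul_le_left _ _)
    have hle2 : ((W*A)^(k+1)).rank ≤ ((A*W)^k).rank := by
      rw [swap_pow W A k]
      exact le_trans (Matrix.rank_mul_le_right _ _) (Matrix.rank_mul_le_left _ _)
    have hrWA : ((W*A)^k).rank = r := by omega
    -- transposed h1
    have hEF : W * X * (W * A) = W * A * (W * X) := by
      calc W * X * (W * A) = W * (X * (W * A)) := Matrix.mul_assoc _ _ _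
      _ = W * (X * W * A) := by rw [← Matrix.mul_assoc X W A]
      _ = W * (A * W * X) := by rw [← h3]
      _ = W * (A * (W * X)) := by rw [Matrix.mul_assoc A W X]
      _ = W * A * (W * X) := by rw [← Matrix.mul_assoc]
    have hcommEF : Commute (W * A) (W * X) := hEF.symm
    have hA1 : (W*A)^(k+1) * (W*X) * W = (W*A)^k * W := by
      calc (W*A)^(k+1) * (W*X) * W = (W*A)^(k+1) * W * X * W := by
            rw [← Matrix.mul_assoc ((W*A)^(k+1)) W X]
      _ = W * (A*W)^(k+1) * X * W := by rw [← swapW A W (k+1)]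
      _ = W * ((A*W)^(k+1) * X) * W := by rw [Matrix.mul_assoc W _ X]
      _ = W * ((A*W)^(k+1) * X * W) := by rw [Matrix.mul_assoc]
      _ = W * (A*W)^k := by rw [h1]
      _ = (W*A)^k * W := swapW A W k
    have hTF : (W*A)^(k+1) * (W*X) * (W*A) = (W*A)^(k+1) := by
      calc (W*A)^(k+1) * (W*X) * (W*A) = (W*A)^(k+1) * (W*X) * W * A := by
            rw [← Matrix.mul_assoc ((W*A)^(k+1) * (W*X)) W A]
      _ = (W*A)^k * W * A := by rw [hA1]
      _ = (W*A)^k * (W*A) := Matrix.mul_assoc _ _ _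
      _ = (W*A)^(k+1) := (pow_succ _ _).symm
    have hEfac : W * X = (W*A)^k * (W*X)^(k+1) := by
      have hXf := X_factor A W X h2 h3 k
      calc W * X = W * ((A*W)^k * (X * (W*X)^k)) := by rw [← hXf]
      _ = W * (A*W)^k * (X * (W*X)^k) := by rw [← Matrix.mul_assoc]
      _ = (W*A)^k * W * (X * (W*X)^k) := by rw [swapW]
      _ = (W*A)^k * (W * (X * (W*X)^k)) := Matrix.mul_assoc _ _ _
      _ = (W*A)^k * (W * X * (W*X)^k) := by rw [← Matrix.mul_assoc W X _]
      _ = (W*A)^k * (W*X)^(k+1) := by rw [← pow_succ']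
    have hZF : ((W*A)^(k+1) * (W*X) - (W*A)^k) * (W*A) = 0 := by
      rw [Matrix.sub_mul, hTF, ← pow_succ, sub_self]
    have hZfac : (W*A)^(k+1) * (W*X) - (W*A)^k
        = ((W*A)^(k+1) * (W*X)^(k+1) - 1) * (W*A)^k := by
      rw [Matrix.sub_mul, Matrix.one_mul]
      congr 1
      calc (W*A)^(k+1) * (W*X) = (W*A)^(k+1) * ((W*A)^k * (W*X)^(k+1)) := by rw [← hEfac]
      _ = (W*A)^(k+1) * ((W*X)^(k+1) * (W*A)^k) := by rw [(hcommEF.pow_pow k (k+1)).eq]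
      _ = (W*A)^(k+1) * (W*X)^(k+1) * (W*A)^k := by rw [← Matrix.mul_assoc]
    have hRgeq : Rg (W*A) k = Rg (W*A) (2*k+1) :=
      Rg_eq_of_le (W*A) hk₂.1 hk2le (by omega)
    obtain ⟨U, hU⟩ := exists_factor_of_range_le ((W*A)^(2*k+1)) ((W*A)^k) (le_of_eq hRgeq)
    have hZFk : ((W*A)^(k+1) * (W*X) - (W*A)^k) * (W*A)^(k+1) = 0 := by
      calc ((W*A)^(k+1) * (W*X) - (W*A)^k) * (W*A)^(k+1)
          = ((W*A)^(k+1) * (W*X) - (W*A)^k) * ((W*A) * (W*A)^k) := by rw [← pow_succ']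
        _ = ((W*A)^(k+1) * (W*X) - (W*A)^k) * (W*A) * (W*A)^k := by rw [← Matrix.mul_assoc]
        _ = 0 := by rw [hZF, Matrix.zero_mul]
    have hVF : ((W*A)^(k+1) * (W*X)^(k+1) - 1) * (W*A)^(2*k+1) = 0 := by
      rw [show 2*k+1 = k + (k+1) from by omega, pow_add (W*A) k (k+1), ← Matrix.mul_assoc, ← hZfac, hZFk]
    have hZzero : (W*A)^(k+1) * (W*X) - (W*A)^k = 0 := by
      rw [hZfac, ← hU, ← Matrix.mul_assoc, hVF, Matrix.zero_mul]
    have hth1 : W * X * (W*A)^(k+1) = (W*A)^k := by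
      have h0 := sub_eq_zero.mp hZzero
      rw [(hcommEF.symm.pow_right (k+1)).eq, h0]
    -- transposed hypotheses
    have h1t : (Aᵀ * Wᵀ)^(k+1) * Xᵀ * Wᵀ = (Aᵀ * Wᵀ)^k := by
      rw [← Matrix.transpose_mul W A, ← Matrix.transpose_pow, ← Matrix.transpose_pow,
        ← Matrix.transpose_mul X ((W*A)^(k+1)), ← Matrix.transpose_mul W (X * (W*A)^(k+1)),
        ← Matrix.mul_assoc W X _, hth1]
    have h2t : Xᵀ * Wᵀ * Aᵀ * Wᵀ * Xᵀ = Xᵀ := by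
      have e : Xᵀ * Wᵀ * Aᵀ * Wᵀ * Xᵀ = (X * W * A * W * X)ᵀ := by
        simp [Matrix.transpose_mul, Matrix.mul_assoc]
      rw [e, h2]
    have h3t : Aᵀ * Wᵀ * Xᵀ = Xᵀ * Wᵀ * Aᵀ := by
      have e1 : Aᵀ * Wᵀ * Xᵀ = (X * W * A)ᵀ := by simp [Matrix.transpose_mul, Matrix.mul_assoc]
      have e2 : Xᵀ * Wᵀ * Aᵀ = (A * W * X)ᵀ := by simp [Matrix.transpose_mul, Matrix.mul_assoc]
      rw [e1, e2, h3]
    have hrt : ((Aᵀ * Wᵀ)^k).rank = r := by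
      rw [← Matrix.transpose_mul W A, ← Matrix.transpose_pow, Matrix.rank_transpose]
      exact hrWA
    have hmc := main_col k r Aᵀ Wᵀ hrt Xᵀ h1t h2t h3t j i
    rw [Matrix.transpose_apply] at hmc
    have hupdt : ((Aᵀ*Wᵀ)^(k+2)).updateCol j (fun l => ((Aᵀ*Wᵀ)^k * Aᵀ) l i)
        = (((W*A)^(k+2)).updateRow j (fun l => (A*(W*A)^k) i l))ᵀ := by
      rw [← Matrix.transpose_mul W A, ← Matrix.transpose_pow, ← Matrix.transpose_pow,
        ← Matrix.transpose_mul A ((W*A)^k), Matrix.updateCol_transpose]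
      congr 1
    have hnum : ∀ β : Finset (Fin n),
        mino (((Aᵀ*Wᵀ)^(k+2)).updateCol j (fun l => ((Aᵀ*Wᵀ)^k * Aᵀ) l i)) β
          = (((W*A)^(k+2)).updateRow j (fun l => (A*(W*A)^k) i l)).pminor β := by
      intro β
      rw [hupdt, mino_transpose, hpm2]
    have hden : ∀ β : Finset (Fin n),
        mino ((Aᵀ*Wᵀ)^(k+2)) β = ((W*A)^(k+2)).pminor β := by
      intro β
      rw [← Matrix.transpose_mul W A, ← Matrix.transpose_pow, mino_transpose, hpm2]
    rw [Finset.sum_congr rfl (fun β _ => hnum β), Finset.sum_congr rfl (fun β _ => hden β)] at hmc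
    exact hmc
end

section
/- Let A ∈ ℂ^{n×n} with Ind A = k and rank A^{k+1} = rank A^k = r, and let y ∈ ℂ^n. Then the Drazin inverse solution x̂ = A^D y of the system Ax = y satisfies, for every i ∈ {1,…,n}: x̂_i = ( Σ_{β ∈ J_{r,n}{i}} |((A^{k+1}_{.i}(f))_β^β| ) / ( Σ_{β ∈ J_{r,n}} |((A^{k+1}))_β^β| ), where f = A^k y. -/
open Matrix

namespace CramerDrazin

open Polynomial Finset Module

variable {n : ℕ}

/-- rows lying in a small submodule force the determinant to vanish -/
lemma det_eq_zero_of_rows_mem {ι : Type*} [Fintype ι] [DecidableEq ι]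
    (R : Matrix ι ι ℂ) (T : Finset ι) (V : Submodule ℂ (ι → ℂ))
    (hfin : Module.finrank ℂ V < T.card) (h : ∀ j ∈ T, R j ∈ V) : R.det = 0 := by
  classical
  have hnl : ¬ LinearIndependent ℂ (fun j : {x // x ∈ T} => (⟨R j.1, h j.1 j.2⟩ : V)) := by
    intro hli
    have := hli.fintype_card_le_finrank
    rw [Fintype.card_coe] at this
    omega
  rw [Fintype.not_linearIndependent_iff] at hnl
  obtain ⟨g, hg, j₀, hj₀⟩ := hnl
  set v : ι → ℂ := fun j => if hj : j ∈ T then g ⟨j, hj⟩ else 0 with hv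
  have hvne : v ≠ 0 := by
    intro h0
    apply hj₀
    have := congrFun h0 j₀.1
    simpa [hv, j₀.2] using this
  have key : ∑ j : {x // x ∈ T}, g j • R j.1 = 0 := by
    have := congrArg (Subtype.val : V → (ι → ℂ)) hg
    simpa using this
  have hvm : v ᵥ* R = 0 := by
    funext l
    have h1 : (v ᵥ* R) l = ∑ j : ι, v j * R j l := by
      simp [Matrix.vecMul, dotProduct]
    rw [h1]
    have h2 : ∑ j : ι, v j * R j l = ∑ j ∈ T, v j * R j l := by
      refine (Finset.sum_subset (Finset.subset_univ T) ?_).symm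
      intro x _ hx
      simp [hv, hx]
    rw [h2]
    have h3 : ∑ j ∈ T, v j * R j l = ∑ j : {x // x ∈ T}, g j * R j.1 l := by
      rw [← Finset.sum_coe_sort]
      refine Finset.sum_congr rfl ?_
      intro j _
      simp [hv, j.2]
    rw [h3]
    have := congrFun key l
    simpa using this
  rw [← Matrix.exists_vecMul_eq_zero_iff]
  exact ⟨v, hvne, hvm⟩

lemma pminor_eq_zero_of_rows (N : Matrix (Fin n) (Fin n) ℂ) (V : Submodule ℂ (Fin n → ℂ))
    (hrow : ∀ j, N j ∈ V) (β : Finset (Fin n)) (hcard : Module.finrank ℂ V < β.card) :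
    N.pminor β = 0 := by
  classical
  apply det_eq_zero_of_rows_mem _ Finset.univ
      (V.map (LinearMap.funLeft ℂ ℂ (fun i : {x // x ∈ β} => (i : Fin n))))
  · calc Module.finrank ℂ (V.map (LinearMap.funLeft ℂ ℂ (fun i : {x // x ∈ β} => (i : Fin n))))
        ≤ Module.finrank ℂ V := Submodule.finrank_map_le _ _
      _ < β.card := hcard
      _ = (Finset.univ : Finset {x // x ∈ β}).card := by
          simp [Finset.card_univ]
  · rintro j -
    exact ⟨N j.1, hrow _, rfl⟩

end CramerDrazin
section Part2
open Matrix Polynomial Finset Module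
namespace CramerDrazin
variable {n : ℕ}

lemma pminor_transpose (N : Matrix (Fin n) (Fin n) ℂ) (β : Finset (Fin n)) :
    Nᵀ.pminor β = N.pminor β := by
  unfold Matrix.pminor
  rw [← Matrix.transpose_submatrix, Matrix.det_transpose]

noncomputable def polyAB (A B : Matrix (Fin n) (Fin n) ℂ) : Polynomial ℂ :=
  ∑ S : Finset (Fin n), Polynomial.C ((Matrix.of (S.piecewise B A)).det) * Polynomial.X ^ S.card

lemma detRow_piecewise_smul (A B : Matrix (Fin n) (Fin n) ℂ) (t : ℂ) (s : Finset (Fin n)) :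
    Matrix.detRowAlternating (s.piecewise (fun j => t • B j) (fun j => A j))
      = t ^ s.card * (Matrix.of (s.piecewise B A)).det := by
  classical
  have e : s.piecewise (fun j => t • B j) (fun j => A j)
      = s.piecewise (fun j => t • (s.piecewise B A) j) (s.piecewise B A) := by
    funext j
    by_cases hj : j ∈ s <;>
      simp [Finset.piecewise, hj]
  rw [e]
  have := (Matrix.detRowAlternating (R := ℂ) (n := Fin n)).toMultilinearMap.map_piecewise_smul
      (fun _ => t) (s.piecewise B A) s
  rw [show (Matrix.of (s.piecewise B A)).det = Matrix.detRowAlternating (s.piecewise B A) from rfl]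
  simpa [Finset.prod_const, smul_eq_mul, mul_comm] using this

lemma eval_polyAB (A B : Matrix (Fin n) (Fin n) ℂ) (t : ℂ) :
    (polyAB A B).eval t = (A + t • B).det := by
  classical
  have h1 : A + t • B = Matrix.of ((fun j => t • B j) + (fun j => A j)) := by
    ext j l
    simp [Matrix.add_apply, add_comm]
  rw [h1]
  have h2 : (Matrix.of ((fun j => t • B j) + (fun j => A j))).det
      = ∑ s : Finset (Fin n),
        Matrix.detRowAlternating (s.piecewise (fun j => t • B j) (fun j => A j)) :=
    (Matrix.detRowAlternating (R := ℂ) (n := Fin n)).toMultilinearMap.map_add_univ _ _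
  rw [h2]
  rw [polyAB, Polynomial.eval_finset_sum]
  refine Finset.sum_congr rfl ?_
  intro s _
  rw [detRow_piecewise_smul]
  simp only [Polynomial.eval_mul, Polynomial.eval_C, Polynomial.eval_pow, Polynomial.eval_X]
  ring

lemma coeff_polyAB (A B : Matrix (Fin n) (Fin n) ℂ) (m : ℕ) :
    (polyAB A B).coeff m
      = ∑ S ∈ Finset.powersetCard m (Finset.univ : Finset (Fin n)),
          (Matrix.of (S.piecewise B A)).det := by
  classical
  rw [polyAB, Polynomial.finset_sum_coeff]
  rw [Finset.powersetCard_eq_filter, Finset.sum_filter, Finset.powerset_univ]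
  refine Finset.sum_congr rfl ?_
  intro S _
  rw [Polynomial.coeff_C_mul, Polynomial.coeff_X_pow]
  by_cases h : S.card = m
  · simp [h]
  · rw [if_neg h, if_neg (fun hm => h hm.symm), mul_zero]

/-- the partial identity-row matrix -/
def UT (T : Finset (Fin n)) : Matrix (Fin n) (Fin n) ℂ :=
  Matrix.of fun j => if j ∈ T then Pi.single j 1 else 0

lemma UT_univ : (UT (Finset.univ : Finset (Fin n))) = (1 : Matrix (Fin n) (Fin n) ℂ) := by
  ext j l
  rw [Matrix.one_apply]
  simp only [UT, Matrix.of_apply, Finset.mem_univ, if_true, Pi.single_apply]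
  exact if_congr eq_comm rfl rfl

lemma det_piecewise_single (A : Matrix (Fin n) (Fin n) ℂ) (S : Finset (Fin n)) :
    (Matrix.of (S.piecewise (fun j => Pi.single j (1:ℂ)) A)).det = A.pminor Sᶜ := by
  classical
  set M0 := Matrix.of (S.piecewise (fun j => Pi.single j (1:ℂ)) A) with hM0
  let e : {x // x ∈ S} ⊕ {x // ¬ x ∈ S} ≃ Fin n := Equiv.sumCompl (· ∈ S)
  rw [← Matrix.det_submatrix_equiv_self e M0]
  have hM : M0.submatrix e e = Matrix.fromBlocks 1 0
      (A.submatrix (fun j : {x // ¬ x ∈ S} => (j : Fin n)) (fun j : {x // x ∈ S} => (j : Fin n)))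
      (A.submatrix (fun j : {x // ¬ x ∈ S} => (j : Fin n))
        (fun j : {x // ¬ x ∈ S} => (j : Fin n))) := by
    ext i j
    cases i with
    | inl a =>
      cases j with
      | inl b =>
        simp [M0, e, Matrix.submatrix_apply, Finset.piecewise, a.2,
          Pi.single_apply, Matrix.one_apply]
        exact if_congr eq_comm rfl rfl
      | inr b =>
        have hne : (b : Fin n) ≠ (a : Fin n) := fun h => b.2 (h ▸ a.2)
        simp [M0, e, Matrix.submatrix_apply, Finset.piecewise, a.2,
          Pi.single_apply, hne]
    | inr a =>
      cases j with
      | inl b =>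
        simp [M0, e, Matrix.submatrix_apply, Finset.piecewise, a.2]
      | inr b =>
        simp [M0, e, Matrix.submatrix_apply, Finset.piecewise, a.2]
  rw [hM, Matrix.det_fromBlocks_zero₁₂, Matrix.det_one, one_mul]
  unfold Matrix.pminor
  let g : {x // x ∈ Sᶜ} ≃ {x // ¬ x ∈ S} :=
    Equiv.subtypeEquivRight (by intro x; simp [Finset.mem_compl])
  rw [← Matrix.det_submatrix_equiv_self g
    (A.submatrix (fun j : {x // ¬ x ∈ S} => (j : Fin n)) (fun j : {x // ¬ x ∈ S} => (j : Fin n)))]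
  rfl

lemma coeff_polyAB_UT (A : Matrix (Fin n) (Fin n) ℂ) (T : Finset (Fin n)) (m : ℕ) :
    (polyAB A (UT T)).coeff m
      = ∑ S ∈ (Finset.powersetCard m (Finset.univ : Finset (Fin n))).filter (· ⊆ T),
          A.pminor Sᶜ := by
  classical
  rw [coeff_polyAB]
  rw [← Finset.sum_filter_add_sum_filter_not
    (Finset.powersetCard m (Finset.univ : Finset (Fin n))) (· ⊆ T)]
  have h0 : ∑ S ∈ (Finset.powersetCard m (Finset.univ : Finset (Fin n))).filter
      (fun S => ¬ S ⊆ T), (Matrix.of (S.piecewise (UT T) A)).det = 0 := by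
    refine Finset.sum_eq_zero ?_
    intro S hS
    rw [Finset.mem_filter] at hS
    obtain ⟨j, hjS, hjT⟩ := Finset.not_subset.mp hS.2
    refine Matrix.det_eq_zero_of_row_eq_zero j ?_
    intro l
    simp [Matrix.of_apply, Finset.piecewise, hjS, UT, hjT]
  rw [h0, add_zero]
  refine Finset.sum_congr rfl ?_
  intro S hS
  rw [Finset.mem_filter] at hS
  rw [← det_piecewise_single A S]
  congr 1
  funext j l
  by_cases hj : j ∈ S
  · simp [Finset.piecewise, hj, UT, hS.2 hj]
  · simp [Finset.piecewise, hj]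

end CramerDrazin
end Part2
section Part3
namespace CramerDrazin
open Matrix Polynomial Finset Module

lemma main (n k r : ℕ) (A : Matrix (Fin n) (Fin n) ℂ)
    (hr1 : (A ^ (k + 1)).rank = r) (hr2 : (A ^ k).rank = r)
    (y : Fin n → ℂ)
    (X : Matrix (Fin n) (Fin n) ℂ)
    (h1 : A ^ (k + 1) * X = A ^ k) (h2 : X * A * X = X) (h3 : A * X = X * A)
    (i : Fin n) :
    X.mulVec y i =
      (∑ β ∈ (Finset.powersetCard r (Finset.univ : Finset (Fin n))).filter
          (fun β => i ∈ β),
        ((A ^ (k + 1)).updateCol i ((A ^ k).mulVec y)).pminor β) /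
      (∑ β ∈ Finset.powersetCard r (Finset.univ : Finset (Fin n)),
        (A ^ (k + 1)).pminor β) := by
  classical
  have hc : Commute A X := h3
  set M : Matrix (Fin n) (Fin n) ℂ := A ^ (k + 1) with hMdef
  set W : Matrix (Fin n) (Fin n) ℂ := A * X with hWdef
  set xh : Fin n → ℂ := X.mulVec y with hxhdef
  set fv : Fin n → ℂ := (A ^ k).mulVec y with hfvdef
  -- basic algebraic identities
  have hXX : X * X * A = X := by rw [mul_assoc, ← h3, ← mul_assoc, h2]
  have hXpow : ∀ m : ℕ, X ^ (m + 1) * A ^ m = X := by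
    intro m
    induction m with
    | zero => simp
    | succ m ih =>
      calc X ^ (m + 1 + 1) * A ^ (m + 1)
          = X ^ m * (X * X * A) * A ^ m := by
            rw [pow_succ, pow_succ, pow_succ']
            simp only [mul_assoc]
        _ = X ^ (m + 1) * A ^ m := by rw [hXX, ← pow_succ]
        _ = X := ih
  have hW2 : W * W = W := by
    show A * X * (A * X) = A * X
    rw [mul_assoc, ← mul_assoc X A X, h2]
  have hAXpow : ∀ m : ℕ, A ^ (m + 1) * X ^ (m + 1) = W := by
    intro m
    induction m with
    | zero => simp [hWdef]
    | succ m ih =>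
      calc A ^ (m + 1 + 1) * X ^ (m + 1 + 1)
          = (A ^ (m + 1) * A) * (X ^ (m + 1) * X) := by
            rw [pow_succ A (m + 1), pow_succ X (m + 1)]
        _ = A ^ (m + 1) * (A * X ^ (m + 1)) * X := by simp only [mul_assoc]
        _ = A ^ (m + 1) * (X ^ (m + 1) * A) * X := by rw [(hc.pow_right (m + 1)).eq]
        _ = (A ^ (m + 1) * X ^ (m + 1)) * (A * X) := by simp only [mul_assoc]
        _ = W * W := by rw [ih]
        _ = W := hW2
  have hMW : M * W = M := by
    calc A ^ (k + 1) * (A * X) = (A ^ (k + 1) * A) * X := by rw [mul_assoc]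
      _ = (A * A ^ (k + 1)) * X := by rw [← pow_succ, ← pow_succ']
      _ = A * (A ^ (k + 1) * X) := by rw [mul_assoc]
      _ = A * A ^ k := by rw [h1]
      _ = A ^ (k + 1) := (pow_succ' A k).symm
  have hWM : W * M = M := by
    calc (A * X) * A ^ (k + 1) = A * (X * A ^ (k + 1)) := by rw [mul_assoc]
      _ = A * (A ^ (k + 1) * X) := by rw [(hc.symm.pow_right (k + 1)).eq]
      _ = A * A ^ k := by rw [h1]
      _ = A ^ (k + 1) := (pow_succ' A k).symm
  have hAkW : A ^ k * W = A ^ k := by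
    calc A ^ k * (A * X) = (A ^ k * A) * X := by rw [mul_assoc]
      _ = A ^ (k + 1) * X := by rw [← pow_succ]
      _ = A ^ k := h1
  have hMX1 : M * X ^ (k + 1) = W := hAXpow k
  have hXsA : ∀ m : ℕ, X ^ (m + 2) * A = X ^ (m + 1) := by
    intro m
    calc X ^ (m + 2) * A = X ^ m * (X * X * A) := by
          rw [pow_succ, pow_succ]
          simp only [mul_assoc]
      _ = X ^ m * X := by rw [hXX]
      _ = X ^ (m + 1) := (pow_succ X m).symm
  have hWX : W * X ^ (k + 1) = X ^ (k + 1) := by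
    calc (A * X) * X ^ (k + 1) = A * (X * X ^ (k + 1)) := by rw [mul_assoc]
      _ = A * X ^ (k + 2) := by rw [← pow_succ']
      _ = X ^ (k + 2) * A := (hc.pow_right (k + 2)).eq
      _ = X ^ (k + 1) := hXsA k
  have hM1W : M * (1 - W) = 0 := by rw [mul_sub, mul_one, hMW, sub_self]
  have h1WM : (1 - W) * M = 0 := by rw [sub_mul, one_mul, hWM, sub_self]
  have hW1W : W * (1 - W) = 0 := by rw [mul_sub, mul_one, hW2, sub_self]
  have h1WW : (1 - W) * W = 0 := by rw [sub_mul, one_mul, hW2, sub_self]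
  have h1W1W : (1 - W) * (1 - W) = 1 - W := by rw [sub_mul, one_mul, hW1W, sub_zero]
  have hGG' : (M + 1 - W) * (X ^ (k + 1) + 1 - W) = 1 := by
    have expand : (M + 1 - W) * (X ^ (k + 1) + 1 - W)
        = M * X ^ (k + 1) + M - M * W + (X ^ (k + 1) + 1 - W)
          - (W * X ^ (k + 1) + W - W * W) := by
      simp only [add_mul, sub_mul, mul_add, mul_sub, mul_one, one_mul]
      abel
    rw [expand, hMX1, hMW, hWX, hW2]
    abel
  -- rank facts
  have hrn : r ≤ n := by
    have := Matrix.rank_le_card_width M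
    rw [hr1, Fintype.card_fin] at this
    exact this
  have hrW : W.rank = r := by
    have hle : W.rank ≤ r := by
      have := Matrix.rank_mul_le_left M (X ^ (k + 1))
      rw [hMX1, hr1] at this
      exact this
    have hge : r ≤ W.rank := by
      have := Matrix.rank_mul_le_right (A ^ k) W
      rw [hAkW, hr2] at this
      exact this
    omega
  -- submodules
  set VM : Submodule ℂ (Fin n → ℂ) := LinearMap.range M.mulVecLin with hVMdef
  have hVM : Module.finrank ℂ VM = r := hr1
  have rowsMt : ∀ j, Mᵀ j ∈ VM := by
    intro j
    exact ⟨Pi.single j 1, by rw [Matrix.mulVecLin_apply, Matrix.mulVec_single_one]; rfl⟩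
  set VW : Submodule ℂ (Fin n → ℂ) := LinearMap.range W.mulVecLin with hVWdef
  have hVW : Module.finrank ℂ VW = r := hrW
  have rowsWt : ∀ j, Wᵀ j ∈ VW := by
    intro j
    exact ⟨Pi.single j 1, by rw [Matrix.mulVecLin_apply, Matrix.mulVec_single_one]; rfl⟩
  set V1W : Submodule ℂ (Fin n → ℂ) := LinearMap.range (1 - W).mulVecLin with hV1Wdef
  have hV1W : Module.finrank ℂ V1W ≤ n - r := by
    have hsub : V1W ≤ LinearMap.ker W.mulVecLin := by
      rintro v ⟨u, rfl⟩
      rw [LinearMap.mem_ker, Matrix.mulVecLin_apply, Matrix.mulVecLin_apply,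
        Matrix.mulVec_mulVec, hW1W, Matrix.zero_mulVec]
    have hker : Module.finrank ℂ (LinearMap.ker W.mulVecLin) = n - r := by
      have hrk := LinearMap.finrank_range_add_finrank_ker W.mulVecLin
      have hfun : Module.finrank ℂ (Fin n → ℂ) = n := by simp
      have hrange : Module.finrank ℂ (LinearMap.range W.mulVecLin) = r := hrW
      omega
    exact (Submodule.finrank_mono hsub).trans hker.le
  have rows1Wt : ∀ j, (1 - W)ᵀ j ∈ V1W := by
    intro j
    exact ⟨Pi.single j 1, by rw [Matrix.mulVecLin_apply, Matrix.mulVec_single_one]; rfl⟩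
  -- vectors
  set w : Fin n → ℂ := (X ^ (2 * k + 2 + 1)).mulVec y with hwdef
  set z : Fin n → ℂ := M.mulVec w with hzdef
  have hMxh : M.mulVec xh = fv := by
    rw [hxhdef, hfvdef, Matrix.mulVec_mulVec, h1]
  have hMz : M.mulVec z = xh := by
    have hMM : M * M * X ^ (2 * k + 2 + 1) = X := by
      calc M * M * X ^ (2 * k + 2 + 1) = A ^ (2 * k + 2) * X ^ (2 * k + 2 + 1) := by
            rw [hMdef, ← pow_add, show k + 1 + (k + 1) = 2 * k + 2 from by omega]
        _ = X ^ (2 * k + 2 + 1) * A ^ (2 * k + 2) := (hc.pow_pow _ _).eq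
        _ = X := hXpow (2 * k + 2)
    rw [hzdef, hwdef, hxhdef, Matrix.mulVec_mulVec, Matrix.mulVec_mulVec, hMM]
  -- polynomials
  set P : Polynomial ℂ := polyAB Mᵀ (UT Finset.univ) with hPdef
  set Qf : Polynomial ℂ := polyAB (Mᵀ.updateRow i fv) (UT (Finset.univ.erase i)) with hQfdef
  set Qz : Polynomial ℂ := polyAB (Mᵀ.updateRow i z) (UT (Finset.univ.erase i)) with hQzdef
  have evalP : ∀ t : ℂ, P.eval t = (M + t • 1).det := by
    intro t
    rw [hPdef, eval_polyAB, UT_univ]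
    have e : Mᵀ + t • (1 : Matrix (Fin n) (Fin n) ℂ) = (M + t • 1)ᵀ := by
      rw [Matrix.transpose_add, Matrix.transpose_smul, Matrix.transpose_one]
    rw [e, Matrix.det_transpose]
  have evalQ : ∀ (v : Fin n → ℂ) (t : ℂ),
      (polyAB (Mᵀ.updateRow i v) (UT (Finset.univ.erase i))).eval t
        = ((M + t • 1).updateCol i v).det := by
    intro v t
    rw [eval_polyAB]
    have e : Mᵀ.updateRow i v + t • UT (Finset.univ.erase i)
        = ((M + t • 1).updateCol i v)ᵀ := by
      ext j l
      rw [Matrix.transpose_apply, Matrix.updateCol_apply]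
      by_cases hj : j = i
      · subst hj
        simp [UT, Matrix.updateRow_self]
      · rw [if_neg hj]
        simp [UT, Matrix.updateRow_ne hj, Finset.mem_erase, hj, Pi.single_apply,
          Matrix.one_apply, Matrix.add_apply]
    rw [e, Matrix.det_transpose]
  -- the polynomial identity
  have hPI : Qf = P * Polynomial.C (xh i) - P * Polynomial.C (z i) * Polynomial.X ^ 1
      + Qz * Polynomial.X ^ 2 := by
    apply Polynomial.funext
    intro t
    simp only [Polynomial.eval_add, Polynomial.eval_sub, Polynomial.eval_mul,
      Polynomial.eval_pow, Polynomial.eval_X, Polynomial.eval_C]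
    rw [hQfdef, hQzdef, evalQ fv t, evalQ z t, evalP t]
    set B : Matrix (Fin n) (Fin n) ℂ := M + t • 1 with hBdef
    have hBx : B.mulVec xh = fv + t • xh := by
      rw [hBdef, Matrix.add_mulVec, Matrix.smul_mulVec, Matrix.one_mulVec, hMxh]
    have hBz : B.mulVec z = xh + t • z := by
      rw [hBdef, Matrix.add_mulVec, Matrix.smul_mulVec, Matrix.one_mulVec, hMz]
    have hf_eq : fv = B.mulVec xh - t • xh := by rw [hBx, add_sub_cancel_right]
    have hxh_eq : xh = B.mulVec z - t • z := by rw [hBz, add_sub_cancel_right]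
    have hkey : ∀ v : Fin n → ℂ, Matrix.cramer B (B.mulVec v) = B.det • v := by
      intro v
      rw [Matrix.cramer_eq_adjugate_mulVec, Matrix.mulVec_mulVec, Matrix.adjugate_mul,
        Matrix.smul_mulVec, Matrix.one_mulVec]
    have c1 : Matrix.cramer B xh = B.det • z - t • Matrix.cramer B z := by
      conv_lhs => rw [hxh_eq]
      rw [map_sub, LinearMap.map_smul, hkey]
    have c2 : Matrix.cramer B fv
        = B.det • xh - t • (B.det • z - t • Matrix.cramer B z) := by
      conv_lhs => rw [hf_eq]
      rw [map_sub, LinearMap.map_smul, hkey, c1]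
    have c3 := congrFun c2 i
    simp only [Matrix.cramer_apply, Pi.sub_apply, Pi.smul_apply, smul_eq_mul] at c3
    rw [c3]
    ring
  -- coefficient identities
  have hPc : P.coeff (n - r)
      = ∑ β ∈ Finset.powersetCard r (Finset.univ : Finset (Fin n)), M.pminor β := by
    rw [hPdef, coeff_polyAB_UT]
    rw [Finset.filter_true_of_mem (fun S _ => Finset.subset_univ S)]
    refine Finset.sum_nbij' (fun S => Sᶜ) (fun β => βᶜ) ?_ ?_ ?_ ?_ ?_
    · intro S hS
      rw [Finset.mem_powersetCard] at hS ⊢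
      refine ⟨Finset.subset_univ _, ?_⟩
      rw [Finset.card_compl, Fintype.card_fin, hS.2]
      omega
    · intro β hβ
      rw [Finset.mem_powersetCard] at hβ ⊢
      refine ⟨Finset.subset_univ _, ?_⟩
      rw [Finset.card_compl, Fintype.card_fin, hβ.2]
    · intro S _
      exact compl_compl S
    · intro β _
      exact compl_compl β
    · intro S _
      rw [pminor_transpose]
  have hQfc : Qf.coeff (n - r)
      = ∑ β ∈ (Finset.powersetCard r (Finset.univ : Finset (Fin n))).filter (fun β => i ∈ β),
          (M.updateCol i fv).pminor β := by
    rw [hQfdef, coeff_polyAB_UT]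
    refine Finset.sum_nbij' (fun S => Sᶜ) (fun β => βᶜ) ?_ ?_ ?_ ?_ ?_
    · intro S hS
      rw [Finset.mem_filter, Finset.mem_powersetCard] at hS
      obtain ⟨⟨-, hcard⟩, hsub⟩ := hS
      rw [Finset.mem_filter, Finset.mem_powersetCard, Finset.mem_compl]
      have hiS : i ∉ S := fun hiS => (Finset.mem_erase.mp (hsub hiS)).1 rfl
      refine ⟨⟨Finset.subset_univ _, ?_⟩, hiS⟩
      rw [Finset.card_compl, Fintype.card_fin, hcard]
      omega
    · intro β hβ
      rw [Finset.mem_filter, Finset.mem_powersetCard] at hβ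
      obtain ⟨⟨-, hcard⟩, hiβ⟩ := hβ
      rw [Finset.mem_filter, Finset.mem_powersetCard]
      constructor
      · refine ⟨Finset.subset_univ _, ?_⟩
        rw [Finset.card_compl, Fintype.card_fin, hcard]
      · intro j hj
        rw [Finset.mem_compl] at hj
        exact Finset.mem_erase.mpr ⟨fun hji => hj (hji ▸ hiβ), Finset.mem_univ j⟩
    · intro S _
      exact compl_compl S
    · intro β _
      exact compl_compl β
    · intro S _
      rw [Matrix.updateRow_transpose, pminor_transpose]
  have hPc1 : 1 ≤ n - r → P.coeff (n - r - 1) = 0 := by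
    intro h1n
    rw [hPdef, coeff_polyAB_UT]
    refine Finset.sum_eq_zero ?_
    intro S hS
    rw [Finset.mem_filter, Finset.mem_powersetCard] at hS
    refine pminor_eq_zero_of_rows Mᵀ VM rowsMt _ ?_
    rw [hVM, Finset.card_compl, Fintype.card_fin, hS.1.2]
    omega
  have hQzc : 2 ≤ n - r → Qz.coeff (n - r - 2) = 0 := by
    intro h2n
    rw [hQzdef, coeff_polyAB_UT]
    refine Finset.sum_eq_zero ?_
    intro S hS
    rw [Finset.mem_filter, Finset.mem_powersetCard] at hS
    have hrows : ∀ j, (Mᵀ.updateRow i z) j ∈ VM := by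
      intro j
      by_cases hj : j = i
      · subst hj
        rw [Matrix.updateRow_self]
        exact ⟨w, by rw [Matrix.mulVecLin_apply, hzdef]⟩
      · rw [Matrix.updateRow_ne hj]
        exact rowsMt j
    refine pminor_eq_zero_of_rows _ VM hrows _ ?_
    rw [hVM, Finset.card_compl, Fintype.card_fin, hS.1.2]
    omega
  have hNmD : (∑ β ∈ (Finset.powersetCard r (Finset.univ : Finset (Fin n))).filter
        (fun β => i ∈ β), (M.updateCol i fv).pminor β)
      = (∑ β ∈ Finset.powersetCard r (Finset.univ : Finset (Fin n)), M.pminor β) * xh i := by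
    have hco := congrArg (fun p : Polynomial ℂ => p.coeff (n - r)) hPI
    simp only [Polynomial.coeff_add, Polynomial.coeff_sub, Polynomial.coeff_mul_X_pow',
      Polynomial.coeff_mul_C] at hco
    rw [hQfc, hPc] at hco
    by_cases hnr2 : 2 ≤ n - r
    · rw [if_pos (by omega : 1 ≤ n - r), if_pos hnr2, hPc1 (by omega), hQzc hnr2] at hco
      simpa using hco
    · by_cases hnr1 : 1 ≤ n - r
      · rw [if_pos hnr1, if_neg hnr2, hPc1 hnr1] at hco
        simpa using hco
      · rw [if_neg hnr1, if_neg hnr2] at hco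
        simpa using hco
  -- nonvanishing of the denominator
  have hDne : (∑ β ∈ Finset.powersetCard r (Finset.univ : Finset (Fin n)),
      M.pminor β) ≠ 0 := by
    set HH : Polynomial ℂ := polyAB Wᵀ (1 - W)ᵀ with hHHdef
    set HH' : Polynomial ℂ := polyAB (1 - W)ᵀ Wᵀ with hHH'def
    set FF : Polynomial ℂ := polyAB (M + 1 - W)ᵀ Wᵀ with hFFdef
    have hHH'X : HH * HH' = Polynomial.X ^ n := by
      apply Polynomial.funext
      intro t
      rw [Polynomial.eval_mul, hHHdef, hHH'def, eval_polyAB, eval_polyAB,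
        Polynomial.eval_pow, Polynomial.eval_X]
      have e1 : Wᵀ + t • (1 - W)ᵀ = (W + t • (1 - W))ᵀ := by
        rw [Matrix.transpose_add, Matrix.transpose_smul]
      have e2 : (1 - W)ᵀ + t • Wᵀ = ((1 - W) + t • W)ᵀ := by
        rw [Matrix.transpose_add, Matrix.transpose_smul]
      rw [e1, e2, Matrix.det_transpose, Matrix.det_transpose, ← Matrix.det_mul]
      have e3 : (W + t • (1 - W)) * ((1 - W) + t • W) = t • 1 := by
        simp only [mul_add, add_mul, smul_mul_assoc, mul_smul_comm, smul_smul,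
          hW1W, hW2, h1W1W, h1WW, smul_zero, add_zero, zero_add]
        rw [← smul_add]
        congr 1
        abel
      rw [e3, Matrix.det_smul, Matrix.det_one, mul_one, Fintype.card_fin]
    have hPFH : P = FF * HH := by
      apply Polynomial.funext
      intro t
      rw [Polynomial.eval_mul, evalP t, hFFdef, hHHdef, eval_polyAB, eval_polyAB]
      have e1 : (M + 1 - W)ᵀ + t • Wᵀ = ((M + 1 - W) + t • W)ᵀ := by
        rw [Matrix.transpose_add, Matrix.transpose_smul]
      have e2 : Wᵀ + t • (1 - W)ᵀ = (W + t • (1 - W))ᵀ := by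
        rw [Matrix.transpose_add, Matrix.transpose_smul]
      rw [e1, e2, Matrix.det_transpose, Matrix.det_transpose, ← Matrix.det_mul]
      congr 1
      simp only [mul_add, add_mul, sub_mul, smul_mul_assoc, mul_smul_comm, smul_smul,
        one_mul, hMW, hM1W, hW2, hW1W, smul_zero, add_zero, zero_add, sub_zero]
      module
    have hdvdH : (Polynomial.X : Polynomial ℂ) ^ (n - r) ∣ HH := by
      rw [Polynomial.X_pow_dvd_iff]
      intro d hd
      rw [hHHdef, coeff_polyAB]
      refine Finset.sum_eq_zero ?_
      intro S hS
      rw [Finset.mem_powersetCard] at hS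
      refine det_eq_zero_of_rows_mem _ Sᶜ VW ?_ ?_
      · rw [hVW, Finset.card_compl, Fintype.card_fin, hS.2]
        omega
      · intro j hj
        rw [Finset.mem_compl] at hj
        have e : (Matrix.of (S.piecewise ((1 - W)ᵀ) Wᵀ)) j = Wᵀ j :=
          Finset.piecewise_eq_of_notMem _ _ _ hj
        rw [e]
        exact rowsWt j
    have hdvdH' : (Polynomial.X : Polynomial ℂ) ^ r ∣ HH' := by
      rw [Polynomial.X_pow_dvd_iff]
      intro d hd
      rw [hHH'def, coeff_polyAB]
      refine Finset.sum_eq_zero ?_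
      intro S hS
      rw [Finset.mem_powersetCard] at hS
      refine det_eq_zero_of_rows_mem _ Sᶜ V1W ?_ ?_
      · refine lt_of_le_of_lt hV1W ?_
        rw [Finset.card_compl, Fintype.card_fin, hS.2]
        omega
      · intro j hj
        rw [Finset.mem_compl] at hj
        have e : (Matrix.of (S.piecewise Wᵀ ((1 - W)ᵀ))) j = (1 - W)ᵀ j :=
          Finset.piecewise_eq_of_notMem _ _ _ hj
        rw [e]
        exact rows1Wt j
    obtain ⟨H2, hH2⟩ := hdvdH
    obtain ⟨H2', hH2'⟩ := hdvdH'
    have hunit : H2 * H2' = 1 := by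
      have hx : (Polynomial.X : Polynomial ℂ) ^ n ≠ 0 :=
        pow_ne_zero _ Polynomial.X_ne_zero
      have hxn : (Polynomial.X : Polynomial ℂ) ^ n
          = Polynomial.X ^ (n - r) * Polynomial.X ^ r := by
        rw [← pow_add]
        congr 1
        omega
      refine mul_left_cancel₀ hx ?_
      rw [mul_one]
      calc (Polynomial.X : Polynomial ℂ) ^ n * (H2 * H2')
          = (Polynomial.X ^ (n - r) * H2) * (Polynomial.X ^ r * H2') := by
            rw [hxn]; ring
        _ = HH * HH' := by rw [← hH2, ← hH2']
        _ = Polynomial.X ^ n := hHH'X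
    obtain ⟨c, hcu, hcC⟩ := Polynomial.isUnit_iff.mp (IsUnit.of_mul_eq_one _ hunit)
    have hc0 : c ≠ 0 := hcu.ne_zero
    have hGdet : (M + 1 - W).det ≠ 0 := by
      have hdet1 : (M + 1 - W).det * (X ^ (k + 1) + 1 - W).det = 1 := by
        rw [← Matrix.det_mul, hGG', Matrix.det_one]
      exact left_ne_zero_of_mul_eq_one hdet1
    have hFc0 : FF.coeff 0 = (M + 1 - W).det := by
      rw [hFFdef, coeff_polyAB, Finset.powersetCard_zero, Finset.sum_singleton]
      exact Matrix.det_transpose _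
    have hP0 : P.coeff (n - r) ≠ 0 := by
      have hPform : P = (FF * Polynomial.C c) * Polynomial.X ^ (n - r) := by
        rw [hPFH, hH2, ← hcC]; ring
      rw [hPform, Polynomial.coeff_mul_X_pow', if_pos le_rfl, Nat.sub_self,
        Polynomial.coeff_mul_C, hFc0]
      exact mul_ne_zero hGdet hc0
    rw [← hPc]
    exact hP0
  rw [eq_div_iff hDne, hNmD]
  exact mul_comm _ _

end CramerDrazin
end Part3

/-- Cramer's rule for the Drazin inverse solution `x̂ = A^D y` of the
system `A x = y`, where `X = A^D` is the Drazin inverse of `A ∈ ℂ^{n×n}` (characterized by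
`A^{k+1} X = A^k`, `XAX = X`, `AX = XA`), `k = Ind A`,
`rank A^{k+1} = rank A^k = r`, and `f = A^k y`:
`x̂_i = (Σ_{β ∈ J_{r,n}{i}} |(A^{k+1}_{.i}(f))_β^β|) / (Σ_{β ∈ J_{r,n}} |(A^{k+1})_β^β|)`. -/
theorem cramer_drazin_inverse_solution
    (n k r : ℕ) (A : Matrix (Fin n) (Fin n) ℂ)
    (hk : IsLeast {j : ℕ | (A ^ (j + 1)).rank = (A ^ j).rank} k)
    (hr1 : (A ^ (k + 1)).rank = r) (hr2 : (A ^ k).rank = r)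
    (y : Fin n → ℂ)
    (X : Matrix (Fin n) (Fin n) ℂ)
    (h1 : A ^ (k + 1) * X = A ^ k) (h2 : X * A * X = X) (h3 : A * X = X * A)
    (i : Fin n) :
    X.mulVec y i =
      (∑ β ∈ (Finset.powersetCard r (Finset.univ : Finset (Fin n))).filter
          (fun β => i ∈ β),
        ((A ^ (k + 1)).updateCol i ((A ^ k).mulVec y)).pminor β) /
      (∑ β ∈ Finset.powersetCard r (Finset.univ : Finset (Fin n)),
        (A ^ (k + 1)).pminor β) := by
  exact CramerDrazin.main n k r A hr1 hr2 y X h1 h2 h3 i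
end
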